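/- arXiv:1605.03830 — 3 statements merged into one kernel-verified Lean document; each statement's English description precedes it below -/
import Mathlib

section
/- Let α > -1, ξ ≤ 0, M ≥ 0, and define the linear functional c_1(q) = ∫_0^∞ q(x)·x^{α+1}·e^{-x}/(x-ξ) dx + M·q(ξ) on real polynomials. Let n ≥ 1 and σ ∈ ℝ, set T_n = L_n^{α+1} - σ·L_{n-1}^{α+1}, and assume that c_1(q·T_n) = 0 for every real polynomial q of degree at most n-1 and that c_1(L_{n-1}^{α+1}) ≠ 0. Then σ = c_1(L_n^{α+1})/c_1(L_{n-1}^{α+1}) and c_1(T_n²) = -(n-1)!·Γ(n+α+1)·c_1(L_n^{α+1})/c_1(L_{n-1}^{α+1}). -/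
open Polynomial MeasureTheory Set

/-- The monic Laguerre–Sonin polynomial `L_n^α`. -/
noncomputable def laguerreS (α : ℝ) (n : ℕ) : Polynomial ℝ :=
  ∑ m ∈ Finset.range (n + 1),
    Polynomial.C ((-1 : ℝ) ^ n * n.factorial * ((-1 : ℝ) ^ m / m.factorial) *
      (Real.Gamma ((n : ℝ) + α + 1) /
        (Real.Gamma ((m : ℝ) + α + 1) * (n - m).factorial))) *
      Polynomial.X ^ m

/-- The linear functional `c_1(q) = ∫_0^∞ q(x)·x^{α+1}·e^{-x}/(x-ξ) dx + M·q(ξ)`. -/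
noncomputable def c1fun (α ξ M : ℝ) (q : Polynomial ℝ) : ℝ :=
  (∫ x in Set.Ioi (0 : ℝ), q.eval x * x ^ (α + 1) * Real.exp (-x) / (x - ξ)) + M * q.eval ξ

noncomputable def Ifun (α : ℝ) (q : Polynomial ℝ) : ℝ :=
  ∫ x in Ioi (0:ℝ), q.eval x * x ^ (α + 1) * Real.exp (-x)

open Finset in
lemma abelstep (n : ℕ) (P : ℕ → ℝ) :
    ∑ m ∈ range (n+2), (-1:ℝ)^m * ((n+1).choose m) * P m
      = ∑ m ∈ range (n+1), (-1:ℝ)^m * (n.choose m) * (P m - P (m+1)) := by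
  set A := ∑ m ∈ range (n+1), (-1:ℝ)^m * (n.choose m) * P m with hA
  set B := ∑ m ∈ range (n+1), (-1:ℝ)^m * (n.choose m) * P (m+1) with hB
  have hD : ∑ m ∈ range (n+1), (-1:ℝ)^(m+1) * (n.choose (m+1)) * P (m+1) = A - P 0 := by
    have h1 : ∑ k ∈ range (n+2), (-1:ℝ)^k * (n.choose k) * P k = A := by
      rw [Finset.sum_range_succ, Nat.choose_eq_zero_of_lt (by omega)]
      simp [hA]
    rw [Finset.sum_range_succ' (fun k => (-1:ℝ)^k * (n.choose k) * P k)] at h1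
    simp only [pow_zero, Nat.choose_zero_right, Nat.cast_one, one_mul] at h1
    linarith
  rw [Finset.sum_range_succ' (fun m => (-1:ℝ)^m * ((n+1).choose m) * P m)]
  simp only [pow_zero, Nat.choose_zero_right, Nat.cast_one, one_mul, pow_succ]
  have : ∀ m ∈ range (n+1), (-1:ℝ)^m * (-1) * ((n+1).choose (m+1)) * P (m+1)
      = (-1:ℝ)^m * (-1) * (n.choose m) * P (m+1) + (-1:ℝ)^(m+1) * (n.choose (m+1)) * P (m+1) := by
    intro m _
    rw [Nat.choose_succ_succ]
    push_cast
    ring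
  rw [Finset.sum_congr rfl this, Finset.sum_add_distrib, hD]
  have hmB : ∑ m ∈ range (n+1), (-1:ℝ)^m * (-1) * (n.choose m) * P (m+1) = -B := by
    rw [hB, ← Finset.sum_neg_distrib]
    exact Finset.sum_congr rfl fun m _ => by ring
  rw [hmB]
  simp only [mul_sub]
  rw [Finset.sum_sub_distrib, ← hA, ← hB]
  ring

open Finset in
lemma keyF : ∀ (n j : ℕ) (t : ℝ), j ≤ n →
    (∑ m ∈ range (n+1), (-1:ℝ)^m * (n.choose m) * ∏ i ∈ range j, ((m:ℝ) + t + i))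
      = if j = n then (-1:ℝ)^n * n.factorial else 0 := by
  intro n
  induction n with
  | zero =>
    intro j t hj
    interval_cases j
    simp
  | succ n IH =>
    intro j t hj
    match j with
    | 0 =>
      have h := Int.alternating_sum_range_choose_of_ne (n := n+1) (by omega)
      have h2 : ((∑ m ∈ range (n+2), ((-1:ℤ)^m * (n+1).choose m) : ℤ) : ℝ) = 0 := by
        rw [h]; simp
      push_cast at h2
      simp only [Finset.prod_range_zero, mul_one]
      rw [if_neg (by omega)]
      convert h2 using 2
    | j'+1 =>
      rw [abelstep]
      have hPQ : ∀ m ∈ range (n+1), (-1:ℝ)^m * (n.choose m) *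
          ((∏ i ∈ range (j'+1), ((m:ℝ) + t + i)) - ∏ i ∈ range (j'+1), (((m+1:ℕ):ℝ) + t + i))
          = (-(j'+1:ℝ)) * ((-1:ℝ)^m * (n.choose m) * ∏ i ∈ range j', ((m:ℝ) + (t+1) + i)) := by
        intro m _
        have e1 : (∏ i ∈ range (j'+1), ((m:ℝ) + t + i))
            = (∏ i ∈ range j', ((m:ℝ) + (t+1) + i)) * ((m:ℝ) + t) := by
          rw [Finset.prod_range_succ' (fun i => (m:ℝ) + t + i)]
          congr 1
          · exact Finset.prod_congr rfl fun i _ => by push_cast; ring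
          · simp
        have e2 : (∏ i ∈ range (j'+1), (((m+1:ℕ):ℝ) + t + i))
            = (∏ i ∈ range j', ((m:ℝ) + (t+1) + i)) * ((m:ℝ) + t + (j'+1)) := by
          rw [Finset.prod_range_succ (fun i => (((m+1:ℕ):ℝ)) + t + i)]
          congr 1
          · exact Finset.prod_congr rfl fun i _ => by push_cast; ring
          · push_cast; ring
        rw [e1, e2]
        ring
      rw [Finset.sum_congr rfl hPQ, ← Finset.mul_sum, IH j' (t+1) (by omega)]
      by_cases hjn : j' = n
      · subst hjn
        rw [if_pos rfl, if_pos rfl]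
        push_cast [Nat.factorial_succ]
        ring
      · rw [if_neg hjn, if_neg (by omega), mul_zero]


lemma gamma_shift (s : ℝ) (hs : 0 < s) (j : ℕ) :
    Real.Gamma (s + j) = Real.Gamma s * ∏ i ∈ Finset.range j, (s + i) := by
  induction j with
  | zero => simp
  | succ j IH =>
    have : s + (j+1:ℕ) = (s + j) + 1 := by push_cast; ring
    rw [this, Real.Gamma_add_one (by positivity), IH, Finset.prod_range_succ]
    ring

lemma integrable_rpow_exp (s : ℝ) (hs : -1 < s) :
    IntegrableOn (fun x => x ^ s * Real.exp (-x)) (Ioi (0:ℝ)) := by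
  have h := Real.GammaIntegral_convergent (s := s + 1) (by linarith)
  refine h.congr_fun (fun x hx => ?_) measurableSet_Ioi
  simp only [add_sub_cancel_right]
  ring

lemma integrable_poly_rpow (q : Polynomial ℝ) (s : ℝ) (hs : -1 < s) :
    IntegrableOn (fun x => q.eval x * x ^ s * Real.exp (-x)) (Ioi (0:ℝ)) := by
  induction q using Polynomial.induction_on' with
  | add p q hp hq =>
    have : (fun x => (p+q).eval x * x ^ s * Real.exp (-x))
        = fun x => p.eval x * x ^ s * Real.exp (-x) + q.eval x * x ^ s * Real.exp (-x) := by
      funext x; simp [eval_add]; ring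
    rw [this]; exact hp.add hq
  | monomial m a =>
    have h : IntegrableOn (fun x => a * (x ^ ((m:ℝ) + s) * Real.exp (-x))) (Ioi (0:ℝ)) :=
      (integrable_rpow_exp ((m:ℝ) + s) (by
        have : (0:ℝ) ≤ m := Nat.cast_nonneg m
        linarith)).const_mul a
    refine h.congr_fun (fun x hx => ?_) measurableSet_Ioi
    have hx' : (0:ℝ) < x := hx
    beta_reduce
    rw [Real.rpow_add hx', Real.rpow_natCast]
    simp only [eval_monomial]
    ring

lemma integral_pow_rpow_exp (α : ℝ) (hα : -1 < α) (k : ℕ) :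
    ∫ x in Ioi (0:ℝ), x ^ k * x ^ (α + 1) * Real.exp (-x) = Real.Gamma (k + α + 2) := by
  have hpos : (0:ℝ) < k + α + 2 := by
    have : (0:ℝ) ≤ k := Nat.cast_nonneg k
    linarith
  rw [Real.Gamma_eq_integral hpos]
  refine setIntegral_congr_fun measurableSet_Ioi (fun x hx => ?_)
  have hx' : (0:ℝ) < x := hx
  have : (k:ℝ) + α + 2 - 1 = (k:ℝ) + (α + 1) := by ring
  rw [this, Real.rpow_add hx' (k:ℝ) (α+1), Real.rpow_natCast]
  ring

variable {α ξ M : ℝ}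

lemma Ifun_add (hα : -1 < α) (p q : Polynomial ℝ) : Ifun α (p + q) = Ifun α p + Ifun α q := by
  unfold Ifun
  rw [← integral_add (integrable_poly_rpow p (α+1) (by linarith))
    (integrable_poly_rpow q (α+1) (by linarith))]
  exact setIntegral_congr_fun measurableSet_Ioi fun x _ => by simp [eval_add]; ring

lemma Ifun_Cmul (a : ℝ) (p : Polynomial ℝ) : Ifun α (C a * p) = a * Ifun α p := by
  unfold Ifun
  rw [← integral_const_mul]
  exact setIntegral_congr_fun measurableSet_Ioi fun x _ => by simp [eval_mul]; ring

lemma Ifun_zero : Ifun α 0 = 0 := by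
  unfold Ifun; simp

lemma Ifun_sum (hα : -1 < α) (s : Finset ℕ) (f : ℕ → Polynomial ℝ) :
    Ifun α (∑ i ∈ s, f i) = ∑ i ∈ s, Ifun α (f i) := by
  induction s using Finset.induction_on with
  | empty => simp [Ifun_zero]
  | @insert a s' h IH =>
      rw [Finset.sum_insert h, Finset.sum_insert h, Ifun_add hα, IH]

lemma Ifun_sub (hα : -1 < α) (p q : Polynomial ℝ) : Ifun α (p - q) = Ifun α p - Ifun α q := by
  have : p - q = p + C (-1) * q := by simp; ring
  rw [this, Ifun_add hα, Ifun_Cmul]; ring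

lemma Ifun_pow (hα : -1 < α) (k : ℕ) : Ifun α (X ^ k) = Real.Gamma (k + α + 2) := by
  unfold Ifun
  rw [← integral_pow_rpow_exp α hα k]
  exact setIntegral_congr_fun measurableSet_Ioi fun x _ => by simp

lemma I_pow_mul_laguerre (hα : -1 < α) (n j : ℕ) (hj : j ≤ n) :
    Ifun α (X ^ j * laguerreS (α+1) n)
      = if j = n then (n.factorial : ℝ) * Real.Gamma (n + α + 2) else 0 := by
  have hGpos : ∀ m : ℕ, 0 < Real.Gamma ((m:ℝ) + α + 2) := fun m =>
    Real.Gamma_pos_of_pos (by have : (0:ℝ) ≤ m := Nat.cast_nonneg m; linarith)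
  unfold laguerreS
  rw [Finset.mul_sum, Ifun_sum hα]
  have hterm : ∀ m ∈ Finset.range (n+1),
      Ifun α (X ^ j * (C ((-1 : ℝ) ^ n * n.factorial * ((-1 : ℝ) ^ m / m.factorial) *
        (Real.Gamma ((n : ℝ) + (α+1) + 1) /
          (Real.Gamma ((m : ℝ) + (α+1) + 1) * (n - m).factorial))) * X ^ m))
      = ((-1:ℝ)^n * Real.Gamma ((n:ℝ) + α + 2)) *
          ((-1:ℝ)^m * (n.choose m) * ∏ i ∈ Finset.range j, ((m:ℝ) + (α+2) + i)) := by
    intro m hm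
    have hmn : m ≤ n := by simpa using Nat.lt_succ_iff.mp (Finset.mem_range.mp hm)
    have e : X ^ j * (C ((-1 : ℝ) ^ n * n.factorial * ((-1 : ℝ) ^ m / m.factorial) *
        (Real.Gamma ((n : ℝ) + (α+1) + 1) /
          (Real.Gamma ((m : ℝ) + (α+1) + 1) * (n - m).factorial))) * X ^ m)
        = C ((-1 : ℝ) ^ n * n.factorial * ((-1 : ℝ) ^ m / m.factorial) *
        (Real.Gamma ((n : ℝ) + (α+1) + 1) /
          (Real.Gamma ((m : ℝ) + (α+1) + 1) * (n - m).factorial))) * X ^ (m + j) := by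
      rw [pow_add]; ring
    rw [e, Ifun_Cmul, Ifun_pow hα]
    have hmj : ((m + j : ℕ) : ℝ) + α + 2 = ((m:ℝ) + α + 2) + j := by push_cast; ring
    rw [hmj, gamma_shift _ (by have : (0:ℝ) ≤ m := Nat.cast_nonneg m; linarith)]
    have hG : Real.Gamma ((m:ℝ) + (α+1) + 1) = Real.Gamma ((m:ℝ) + α + 2) := by ring_nf
    have hchoose : (n.factorial : ℝ) / (m.factorial * (n-m).factorial) = n.choose m := by
      have h := Nat.choose_mul_factorial_mul_factorial hmn
      field_simp
      push_cast [← h]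
      ring
    have hprod : (∏ i ∈ Finset.range j, ((m:ℝ) + α + 2 + i))
        = ∏ i ∈ Finset.range j, ((m:ℝ) + (α+2) + i) :=
      Finset.prod_congr rfl fun i _ => by ring
    rw [hG]
    have hGne : Real.Gamma ((m:ℝ) + α + 2) ≠ 0 := ne_of_gt (hGpos m)
    have hGn : Real.Gamma ((n:ℝ) + (α+1) + 1) = Real.Gamma ((n:ℝ) + α + 2) := by ring_nf
    rw [hGn, ← hprod]
    field_simp
    rw [← hchoose]
    field_simp
  rw [Finset.sum_congr rfl hterm, ← Finset.mul_sum, keyF n j (α+2) hj]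
  by_cases h : j = n
  · rw [if_pos h, if_pos h]
    have h1 : (-1:ℝ)^n * (-1:ℝ)^n = 1 := by
      rw [← pow_add]; exact Even.neg_one_pow (Even.add_self n)
    linear_combination ((n.factorial : ℝ) * Real.Gamma (n + α + 2)) * h1
  · rw [if_neg h, if_neg h, mul_zero]

lemma laguerre_natDegree_le (β : ℝ) (n : ℕ) : (laguerreS β n).natDegree ≤ n := by
  unfold laguerreS
  refine (Polynomial.natDegree_sum_le _ _).trans ?_
  rw [Finset.fold_max_le]
  refine ⟨Nat.zero_le n, fun m hm => ?_⟩
  refine (Polynomial.natDegree_mul_le).trans ?_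
  simp only [natDegree_C, natDegree_pow, natDegree_X, zero_add, mul_one]
  simpa using Nat.lt_succ_iff.mp (Finset.mem_range.mp hm)

lemma laguerre_coeff_top (hα : -1 < α) (n : ℕ) : (laguerreS (α+1) n).coeff n = 1 := by
  unfold laguerreS
  rw [Polynomial.finset_sum_coeff]
  have : ∀ m ∈ Finset.range (n+1),
      (C ((-1 : ℝ) ^ n * n.factorial * ((-1 : ℝ) ^ m / m.factorial) *
      (Real.Gamma ((n : ℝ) + (α+1) + 1) /
        (Real.Gamma ((m : ℝ) + (α+1) + 1) * (n - m).factorial))) * X ^ m).coeff n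
      = if m = n then 1 else 0 := by
    intro m hm
    rw [Polynomial.coeff_C_mul, Polynomial.coeff_X_pow]
    by_cases h : m = n
    · subst h
      rw [if_pos rfl, mul_one]
      have hG : Real.Gamma ((m:ℝ) + (α+1) + 1) ≠ 0 := by
        refine ne_of_gt (Real.Gamma_pos_of_pos ?_)
        have : (0:ℝ) ≤ m := Nat.cast_nonneg m
        linarith
      rw [Nat.sub_self, Nat.factorial_zero, Nat.cast_one, mul_one, div_self hG]
      have h1 : (-1:ℝ)^m * (-1:ℝ)^m = 1 := by
        rw [← pow_add]; exact Even.neg_one_pow ⟨m, rfl⟩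
      have hmf : (m.factorial : ℝ) ≠ 0 := Nat.cast_ne_zero.mpr m.factorial_ne_zero
      field_simp
      linear_combination h1
    · rw [if_neg h, if_neg (fun hh => h hh.symm), mul_zero]
  rw [Finset.sum_congr rfl this, Finset.sum_ite_eq' (Finset.range (n+1)) n (fun _ => (1:ℝ))]
  rw [if_pos (Finset.self_mem_range_succ n)]

lemma laguerre_monic (hα : -1 < α) (n : ℕ) : (laguerreS (α+1) n).Monic :=
  Polynomial.monic_of_natDegree_le_of_coeff_eq_one n (laguerre_natDegree_le _ n)
    (laguerre_coeff_top hα n)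

lemma laguerre_natDegree (hα : -1 < α) (n : ℕ) : (laguerreS (α+1) n).natDegree = n :=
  le_antisymm (laguerre_natDegree_le _ n)
    (Polynomial.le_natDegree_of_ne_zero (by rw [laguerre_coeff_top hα n]; exact one_ne_zero))

lemma I_mul_laguerre (hα : -1 < α) (n : ℕ) (q : Polynomial ℝ) (hq : q.natDegree ≤ n) :
    Ifun α (q * laguerreS (α+1) n) = q.coeff n * (n.factorial : ℝ) * Real.Gamma (n + α + 2) := by
  have hq' : q = ∑ j ∈ Finset.range (n+1), C (q.coeff j) * X ^ j := by
    conv_lhs => rw [q.as_sum_range' (n+1) (Nat.lt_succ_of_le hq)]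
    exact Finset.sum_congr rfl fun j _ => (Polynomial.C_mul_X_pow_eq_monomial).symm
  conv_lhs => rw [hq', Finset.sum_mul]
  have : ∀ j ∈ Finset.range (n+1),
      C (q.coeff j) * X ^ j * laguerreS (α+1) n = C (q.coeff j) * (X ^ j * laguerreS (α+1) n) :=
    fun j _ => by ring
  rw [Finset.sum_congr rfl this, Ifun_sum hα]
  have : ∀ j ∈ Finset.range (n+1),
      Ifun α (C (q.coeff j) * (X ^ j * laguerreS (α+1) n))
      = if j = n then q.coeff j * ((n.factorial : ℝ) * Real.Gamma (n + α + 2)) else 0 := by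
    intro j hj
    rw [Ifun_Cmul, I_pow_mul_laguerre hα n j (Nat.lt_succ_iff.mp (Finset.mem_range.mp hj))]
    by_cases h : j = n
    · rw [if_pos h, if_pos h]
    · rw [if_neg h, if_neg h, mul_zero]
  rw [Finset.sum_congr rfl this, Finset.sum_ite_eq' (Finset.range (n+1)) n
    (fun j => q.coeff j * ((n.factorial : ℝ) * Real.Gamma (n + α + 2))),
    if_pos (Finset.self_mem_range_succ n)]
  ring

lemma integrable_c1 (hα : -1 < α) (hξ : ξ ≤ 0) (q : Polynomial ℝ) :
    IntegrableOn (fun x => q.eval x * x ^ (α + 1) * Real.exp (-x) / (x - ξ)) (Ioi (0:ℝ)) := by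
  set Q : Polynomial ℝ := ∑ i ∈ Finset.range (q.natDegree + 1), C |q.coeff i| * X ^ i with hQ
  have habs : ∀ x : ℝ, 0 < x → |q.eval x| ≤ Q.eval x := by
    intro x hx
    rw [q.eval_eq_sum_range, hQ]
    simp only [eval_finset_sum, eval_mul, eval_C, eval_pow, eval_X]
    refine (Finset.abs_sum_le_sum_abs _ _).trans (Finset.sum_le_sum fun i _ => ?_)
    rw [abs_mul, abs_pow, abs_of_pos hx]
  have hQint : IntegrableOn (fun x => Q.eval x * x ^ α * Real.exp (-x)) (Ioi (0:ℝ)) :=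
    integrable_poly_rpow Q α hα
  refine Integrable.mono' hQint ?_ ?_
  · refine ContinuousOn.aestronglyMeasurable ?_ measurableSet_Ioi
    have hcont : ContinuousOn (fun x : ℝ => x ^ (α+1)) (Ioi 0) := fun x hx =>
      (Real.continuousAt_rpow_const x (α+1) (Or.inl (ne_of_gt hx))).continuousWithinAt
    refine ((((q.continuous_aeval.continuousOn.mul hcont)).mul
      (Real.continuous_exp.comp continuous_neg).continuousOn).div
      ((continuous_id.sub continuous_const).continuousOn) ?_)
    intro x hx
    have : (0:ℝ) < x := hx
    intro h
    linarith [sub_eq_zero.mp h ▸ this]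
  · filter_upwards [self_mem_ae_restrict (measurableSet_Ioi : MeasurableSet (Ioi (0:ℝ)))]
      with x hx
    have hx' : (0:ℝ) < x := hx
    have hxξ : 0 < x - ξ := by linarith
    have h1 : ‖q.eval x * x ^ (α + 1) * Real.exp (-x) / (x - ξ)‖
        = |q.eval x| * x ^ (α + 1) * Real.exp (-x) / (x - ξ) := by
      rw [Real.norm_eq_abs, abs_div, abs_of_pos hxξ, abs_mul, abs_mul,
        abs_of_pos (Real.rpow_pos_of_pos hx' _), abs_of_pos (Real.exp_pos _)]
    rw [h1]
    have h2 : x ^ (α + 1) / (x - ξ) ≤ x ^ α := by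
      rw [Real.rpow_add_one (ne_of_gt hx'), div_le_iff₀ hxξ]
      have : x ≤ x - ξ := by linarith
      calc x ^ α * x ≤ x ^ α * (x - ξ) := by
            exact mul_le_mul_of_nonneg_left this (le_of_lt (Real.rpow_pos_of_pos hx' _))
        _ = x ^ α * (x - ξ) := rfl
    have hQx : 0 ≤ Q.eval x := le_trans (abs_nonneg _) (habs x hx')
    calc |q.eval x| * x ^ (α + 1) * Real.exp (-x) / (x - ξ)
        = |q.eval x| * Real.exp (-x) * (x ^ (α + 1) / (x - ξ)) := by ring
      _ ≤ |q.eval x| * Real.exp (-x) * x ^ α := by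
          exact mul_le_mul_of_nonneg_left h2 (by positivity)
      _ ≤ Q.eval x * Real.exp (-x) * x ^ α := by
          have := habs x hx'
          have he : (0:ℝ) ≤ Real.exp (-x) * x ^ α := by positivity
          nlinarith [Real.exp_pos (-x), Real.rpow_pos_of_pos hx' α]
      _ = Q.eval x * x ^ α * Real.exp (-x) := by ring

lemma c1_add (hα : -1 < α) (hξ : ξ ≤ 0) (p q : Polynomial ℝ) :
    c1fun α ξ M (p + q) = c1fun α ξ M p + c1fun α ξ M q := by
  unfold c1fun
  rw [show (fun x => (p+q).eval x * x ^ (α+1) * Real.exp (-x) / (x - ξ))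
      = fun x => p.eval x * x ^ (α+1) * Real.exp (-x) / (x - ξ)
        + q.eval x * x ^ (α+1) * Real.exp (-x) / (x - ξ) from funext fun x => by
      simp [eval_add]; ring]
  rw [integral_add (integrable_c1 hα hξ p) (integrable_c1 hα hξ q)]
  simp [eval_add]; ring

lemma c1_Cmul (a : ℝ) (q : Polynomial ℝ) :
    c1fun α ξ M (C a * q) = a * c1fun α ξ M q := by
  unfold c1fun
  rw [show (fun x => (C a * q).eval x * x ^ (α+1) * Real.exp (-x) / (x - ξ))
      = fun x => a * (q.eval x * x ^ (α+1) * Real.exp (-x) / (x - ξ)) from funext fun x => by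
      simp [eval_mul]; ring]
  rw [integral_const_mul]
  simp; ring

lemma c1_sub (hα : -1 < α) (hξ : ξ ≤ 0) (p q : Polynomial ℝ) :
    c1fun α ξ M (p - q) = c1fun α ξ M p - c1fun α ξ M q := by
  have h : p - q = p + C (-1) * q := by simp; ring
  rw [h, c1_add hα hξ, c1_Cmul]; ring

lemma c1_XsubC_mul (hξ : ξ ≤ 0) (q : Polynomial ℝ) :
    c1fun α ξ M ((X - C ξ) * q) = Ifun α q := by
  unfold c1fun
  have h2 : ((X - C ξ) * q).eval ξ = 0 := by simp
  rw [h2, mul_zero, add_zero]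
  show _ = Ifun α q
  unfold Ifun
  refine setIntegral_congr_fun measurableSet_Ioi (fun x hx => ?_)
  have hx' : (0:ℝ) < x := hx
  have hxξ : x - ξ ≠ 0 := by intro h; nlinarith [sub_eq_zero.mp h]
  simp only [eval_mul, eval_sub, eval_X, eval_C]
  field_simp

theorem stmt12 (α ξ M : ℝ) (hα : -1 < α) (hξ : ξ ≤ 0) (hM : 0 ≤ M)
    (n : ℕ) (hn : 1 ≤ n) (σ : ℝ) (T : Polynomial ℝ)
    (hT : T = laguerreS (α + 1) n - Polynomial.C σ * laguerreS (α + 1) (n - 1))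
    (horth : ∀ q : Polynomial ℝ, q.degree < n → c1fun α ξ M (q * T) = 0)
    (hne : c1fun α ξ M (laguerreS (α + 1) (n - 1)) ≠ 0) :
    σ = c1fun α ξ M (laguerreS (α + 1) n) / c1fun α ξ M (laguerreS (α + 1) (n - 1)) ∧
    c1fun α ξ M (T ^ 2) =
      -(((n - 1).factorial : ℝ) * Real.Gamma ((n : ℝ) + α + 1) *
        c1fun α ξ M (laguerreS (α + 1) n) / c1fun α ξ M (laguerreS (α + 1) (n - 1))) := by
  obtain ⟨k, rfl⟩ : ∃ k, n = k + 1 := ⟨n - 1, (Nat.succ_pred_eq_of_pos hn).symm⟩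
  simp only [Nat.add_sub_cancel] at hT hne ⊢
  set L1 := laguerreS (α + 1) (k + 1) with hL1
  set L0 := laguerreS (α + 1) k with hL0
  have hdeg1 : (1 : Polynomial ℝ).degree < ((k+1 : ℕ) : WithBot ℕ) := by
    rw [Polynomial.degree_one]
    exact_mod_cast Nat.succ_pos k
  have h0 : c1fun α ξ M T = 0 := by simpa [one_mul] using horth 1 hdeg1
  have hT0 : c1fun α ξ M T = c1fun α ξ M L1 - σ * c1fun α ξ M L0 := by
    rw [hT, c1_sub hα hξ, c1_Cmul]
  have hσ : σ * c1fun α ξ M L0 = c1fun α ξ M L1 := by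
    rw [hT0] at h0; linarith
  have part1 : σ = c1fun α ξ M L1 / c1fun α ξ M L0 := (eq_div_iff hne).mpr hσ
  refine ⟨part1, ?_⟩
  have hm1 : L1.Monic := laguerre_monic hα (k+1)
  have hm0 : L0.Monic := laguerre_monic hα k
  have hdegL0 : L0.degree < ((k+1 : ℕ) : WithBot ℕ) := by
    refine lt_of_le_of_lt Polynomial.degree_le_natDegree ?_
    exact_mod_cast Nat.lt_succ_of_le (laguerre_natDegree_le _ k)
  have hL0T : c1fun α ξ M (L0 * T) = 0 := horth L0 hdegL0
  set r : Polynomial ℝ := L1 - (X - C ξ) * L0 with hr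
  have hd1 : L1.degree = ((k+1 : ℕ) : WithBot ℕ) := by
    rw [Polynomial.degree_eq_natDegree hm1.ne_zero, laguerre_natDegree hα]
  have hdq : ((X - C ξ) * L0).degree = ((k+1 : ℕ) : WithBot ℕ) := by
    rw [Polynomial.degree_mul, Polynomial.degree_X_sub_C,
      Polynomial.degree_eq_natDegree hm0.ne_zero, laguerre_natDegree hα]
    exact_mod_cast congrArg (Nat.cast : ℕ → WithBot ℕ) (by omega : 1 + k = k + 1)
  have hrdeg : r.degree < ((k+1 : ℕ) : WithBot ℕ) := by
    rw [hr, ← hd1]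
    refine Polynomial.degree_sub_lt (by rw [hd1, hdq]) hm1.ne_zero ?_
    rw [hm1.leadingCoeff, ((monic_X_sub_C ξ).mul hm0).leadingCoeff]
  have hrT : c1fun α ξ M (r * T) = 0 := horth r hrdeg
  have hsplit : L1 * T = (X - C ξ) * (L0 * T) + r * T := by rw [hr]; ring
  have hc1L1T : c1fun α ξ M (L1 * T) = Ifun α (L0 * T) := by
    rw [hsplit, c1_add hα hξ, c1_XsubC_mul hξ, hrT, add_zero]
  have hTT : T ^ 2 = L1 * T - C σ * (L0 * T) := by rw [hT]; ring
  have hcT2 : c1fun α ξ M (T ^ 2) = Ifun α (L0 * T) := by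
    rw [hTT, c1_sub hα hξ, c1_Cmul, hL0T, mul_zero, sub_zero, hc1L1T]
  have hL0T' : L0 * T = L0 * L1 - C σ * (L0 * L0) := by rw [hT]; ring
  have hI01 : Ifun α (L0 * L1) = 0 := by
    rw [hL1, I_mul_laguerre hα (k+1) L0 (le_trans (laguerre_natDegree_le _ k) (Nat.le_succ k)),
      Polynomial.coeff_eq_zero_of_natDegree_lt
        (Nat.lt_succ_of_le (laguerre_natDegree_le _ k))]
    ring
  have hI00 : Ifun α (L0 * L0) = (k.factorial : ℝ) * Real.Gamma (k + α + 2) := by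
    rw [hL0, I_mul_laguerre hα k L0 (laguerre_natDegree_le _ k), laguerre_coeff_top hα k]
    ring
  have hres : c1fun α ξ M (T ^ 2) = -σ * ((k.factorial : ℝ) * Real.Gamma (k + α + 2)) := by
    rw [hcT2, hL0T', Ifun_sub hα, Ifun_Cmul, hI01, hI00]
    ring
  rw [hres, part1]
  have hcast : Real.Gamma (((k+1 : ℕ) : ℝ) + α + 1) = Real.Gamma ((k : ℝ) + α + 2) := by
    push_cast; ring_nf
  rw [hcast]
  ring
end

section
/- Let α > 0, β > 0, and ξ ∈ ℝ with |ξ| > 1; set ε = 1 if ξ < -1 and ε = -1 if ξ > 1. Let n ∈ ℕ and assume P_n^{(α-1,β-1)}(ξ) ≠ 0 and P_{n+1}^{(α-1,β-1)}(ξ) ≠ 0 (which holds since all zeros of Jacobi polynomials lie in (-1,1)). Let P_n(·,ξ) be the real polynomial satisfying (X - ξ)·P_n(X,ξ) = P_{n+1}^{(α-1,β-1)}(X) - (P_{n+1}^{(α-1,β-1)}(ξ)/P_n^{(α-1,β-1)}(ξ))·P_n^{(α-1,β-1)}(X). Then P_n(·,ξ) is monic of degree n, ∫_{-1}^1 q(x)·P_n(x,ξ)·ε(x-ξ)·(1-x)^{α-1}(1+x)^{β-1}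 dx = 0 for every real polynomial q of degree at most n-1, and ∫_{-1}^1 P_n(x,ξ)²·ε(x-ξ)·(1-x)^{α-1}(1+x)^{β-1} dx = -ε·k_n^{(α-1,β-1)}·P_{n+1}^{(α-1,β-1)}(ξ)/P_n^{(α-1,β-1)}(ξ). -/
open Polynomial MeasureTheory

/-- The monic Jacobi polynomial `P_n^{(α,β)}`. -/
noncomputable def jacobiP (α β : ℝ) (n : ℕ) : Polynomial ℝ :=
  ∑ m ∈ Finset.range (n + 1),
    Polynomial.C ((2 : ℝ) ^ n * (Real.Gamma (α + n + 1) / Real.Gamma (α + β + 2 * n + 1)) *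
      (n.choose m) * (Real.Gamma (α + β + n + m + 1) / Real.Gamma (α + m + 1)) *
      ((1 : ℝ) / 2) ^ m) * (Polynomial.X - 1) ^ m

/-- The squared norm `k_n^{(α,β)}` of the monic Jacobi polynomial. -/
noncomputable def knorm (α β : ℝ) (n : ℕ) : ℝ :=
  (2 : ℝ) ^ (2 * (n : ℝ) + α + β + 1) * n.factorial * Real.Gamma ((n : ℝ) + α + 1) *
    Real.Gamma ((n : ℝ) + β + 1) * Real.Gamma ((n : ℝ) + α + β + 1) /
    ((2 * (n : ℝ) + α + β + 1) * Real.Gamma (2 * (n : ℝ) + α + β + 1) ^ 2)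

namespace Stmt15
open Set Finset


/-- n-th finite difference of a polynomial of degree < n vanishes. -/
lemma alt_sum_eval (n : ℕ) : ∀ (p : Polynomial ℝ), p.degree < n →
    ∑ m ∈ Finset.range (n + 1), (-1 : ℝ) ^ m * (n.choose m) * p.eval (m : ℝ) = 0 := by
  induction n with
  | zero =>
    intro p hp
    have hp0 : p = 0 := by
      rcases eq_or_ne p 0 with h | h
      · exact h
      · exact absurd hp (not_lt.2 ((Polynomial.zero_le_degree_iff).2 h))
    simp [hp0]
  | succ k ih =>
    intro p hp
    rcases eq_or_ne p 0 with rfl | hp0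
    · simp
    set g : Polynomial ℝ := p - Polynomial.taylor 1 p with hg
    have htd : (Polynomial.taylor 1 p).natDegree = p.natDegree := Polynomial.natDegree_taylor p 1
    have hXC : (X + Polynomial.C (1:ℝ)).natDegree = 1 := Polynomial.natDegree_X_add_C 1
    have htl : (Polynomial.taylor 1 p).leadingCoeff = p.leadingCoeff := by
      rw [Polynomial.taylor_apply, Polynomial.leadingCoeff_comp (by rw [hXC]; norm_num)]
      rw [Polynomial.leadingCoeff_X_add_C]
      simp
    have htne : Polynomial.taylor 1 p ≠ 0 := by
      intro h
      exact hp0 (by simpa using Polynomial.taylor_injective 1 (by simp [h]))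
    have hdeq : (Polynomial.taylor 1 p).degree = p.degree := by
      rw [Polynomial.degree_eq_natDegree htne, Polynomial.degree_eq_natDegree hp0, htd]
    have hgd : g.degree < p.degree := Polynomial.degree_sub_lt hdeq.symm hp0 htl.symm
    have hgdk : g.degree < (k : ℕ) := by
      have hpk : p.degree ≤ (k : ℕ) := by
        have := hp
        rw [Polynomial.degree_eq_natDegree hp0] at this ⊢
        exact_mod_cast Nat.lt_succ_iff.mp (by exact_mod_cast this)
      exact lt_of_lt_of_le hgd hpk
    have IH := ih g hgdk
    have hge : ∀ m : ℕ, g.eval (m : ℝ) = p.eval (m : ℝ) - p.eval ((m : ℝ) + 1) := by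
      intro m
      simp [hg, Polynomial.taylor_eval]
    have expand : ∑ m ∈ Finset.range (k + 2), (-1 : ℝ) ^ m * ((k+1).choose m) * p.eval (m : ℝ)
        = (∑ m ∈ Finset.range (k + 1), (-1 : ℝ) ^ m * (k.choose m) * p.eval (m : ℝ))
          - ∑ m ∈ Finset.range (k + 1), (-1 : ℝ) ^ m * (k.choose m) * p.eval ((m : ℝ) + 1) := by
      rw [Finset.sum_range_succ' _ (k + 1)]
      have h1 : ∀ i ∈ Finset.range (k + 1),
          (-1 : ℝ) ^ (i+1) * ((k+1).choose (i+1)) * p.eval ((i+1 : ℕ) : ℝ)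
          = (-(-1 : ℝ) ^ i) * (k.choose i) * p.eval ((i : ℝ) + 1)
            + (-1 : ℝ) ^ (i+1) * (k.choose (i+1)) * p.eval ((i+1 : ℕ) : ℝ) := by
        intro i _
        rw [Nat.choose_succ_succ]
        push_cast
        ring
      rw [Finset.sum_congr rfl h1, Finset.sum_add_distrib]
      have h2 : (∑ i ∈ Finset.range (k + 1),
            (-1:ℝ) ^ (i+1) * (k.choose (i+1)) * p.eval ((i+1:ℕ) : ℝ))
          = (∑ m ∈ Finset.range (k + 1), (-1 : ℝ) ^ m * (k.choose m) * p.eval (m : ℝ))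
            - (-1:ℝ) ^ 0 * (k.choose 0) * p.eval ((0:ℕ) : ℝ) := by
        rw [Finset.sum_range_succ
          (fun i => (-1:ℝ) ^ (i+1) * (k.choose (i+1)) * p.eval ((i+1:ℕ) : ℝ)) k,
          Finset.sum_range_succ' (fun m => (-1 : ℝ) ^ m * (k.choose m) * p.eval (m : ℝ)) k]
        simp [Nat.choose_succ_self]
      have h3 : (∑ i ∈ Finset.range (k + 1), (-(-1:ℝ) ^ i) * (k.choose i) * p.eval ((i : ℝ) + 1))
          = - ∑ m ∈ Finset.range (k + 1), (-1 : ℝ) ^ m * (k.choose m) * p.eval ((m:ℝ) + 1) := by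
        rw [← Finset.sum_neg_distrib]
        exact Finset.sum_congr rfl (by intro i _; ring)
      rw [h2, h3]
      simp
      ring
    rw [expand, ← Finset.sum_sub_distrib]
    have hcong : ∀ m ∈ Finset.range (k+1),
        (-1 : ℝ) ^ m * (k.choose m) * p.eval (m : ℝ)
          - (-1:ℝ) ^ m * (k.choose m) * p.eval ((m:ℝ)+1)
        = (-1 : ℝ) ^ m * (k.choose m) * g.eval (m : ℝ) := by
      intro m _
      rw [hge m]; ring
    rw [Finset.sum_congr rfl hcong]
    exact IH

/-- Partial fraction identity. -/
lemma alt_sum_inv (n : ℕ) : ∀ (s : ℝ), (∀ i ∈ Finset.range (n + 1), s + i ≠ 0) →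
    ∑ m ∈ Finset.range (n + 1), (-1 : ℝ) ^ m * (n.choose m) / (s + m)
      = (n.factorial : ℝ) / ∏ i ∈ Finset.range (n + 1), (s + i) := by
  induction n with
  | zero => intro s hs; simp
  | succ k ih =>
    intro s hs
    have hs0 : s ≠ 0 := by simpa using hs 0 (by simp)
    have hsk : s + ((k:ℝ) + 1) ≠ 0 := by
      have := hs (k+1) (by simp)
      push_cast at this; exact this
    have hA : ∀ i ∈ Finset.range (k + 1), s + i ≠ 0 :=
      fun i hi => hs i (Finset.mem_range.2 (Nat.lt_succ_of_lt (Finset.mem_range.1 hi)))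
    have hB : ∀ i ∈ Finset.range (k + 1), (s + 1) + i ≠ 0 := by
      intro i hi
      have h := hs (i + 1) (Finset.mem_range.2 (Nat.succ_lt_succ (Finset.mem_range.1 hi)))
      intro hcon
      exact h (by push_cast; linarith)
    have IH1 := ih s hA
    have IH2 := ih (s + 1) hB
    have expand : ∑ m ∈ Finset.range (k + 2), (-1 : ℝ) ^ m * ((k+1).choose m) / (s + m)
        = (∑ m ∈ Finset.range (k + 1), (-1 : ℝ) ^ m * (k.choose m) / (s + m))
          - ∑ m ∈ Finset.range (k + 1), (-1 : ℝ) ^ m * (k.choose m) / ((s + 1) + m) := by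
      rw [Finset.sum_range_succ' _ (k + 1)]
      have h1 : ∀ i ∈ Finset.range (k + 1),
          (-1 : ℝ) ^ (i+1) * ((k+1).choose (i+1)) / (s + ((i+1 : ℕ) : ℝ))
          = (-((-1 : ℝ) ^ i * (k.choose i) / ((s + 1) + (i : ℝ))))
            + (-1 : ℝ) ^ (i+1) * (k.choose (i+1)) / (s + ((i+1 : ℕ) : ℝ)) := by
        intro i hi
        have hne : (s + 1) + (i:ℝ) ≠ 0 := hB i hi
        rw [Nat.choose_succ_succ]
        push_cast
        rw [show s + ((i:ℝ) + 1) = (s + 1) + (i:ℝ) by ring]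
        field_simp
        ring
      rw [Finset.sum_congr rfl h1, Finset.sum_add_distrib]
      have h2 : (∑ i ∈ Finset.range (k + 1),
            (-1:ℝ) ^ (i+1) * (k.choose (i+1)) / (s + ((i+1:ℕ) : ℝ)))
          = (∑ m ∈ Finset.range (k + 1), (-1 : ℝ) ^ m * (k.choose m) / (s + m))
            - (-1:ℝ) ^ 0 * (k.choose 0) / (s + ((0:ℕ) : ℝ)) := by
        rw [Finset.sum_range_succ
          (fun i => (-1:ℝ) ^ (i+1) * (k.choose (i+1)) / (s + ((i+1:ℕ) : ℝ))) k,
          Finset.sum_range_succ' (fun m => (-1 : ℝ) ^ m * (k.choose m) / (s + m)) k]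
        simp [Nat.choose_succ_self]
      have h3 : (∑ i ∈ Finset.range (k + 1), (-((-1:ℝ) ^ i * (k.choose i) / ((s+1) + (i:ℝ)))))
          = - ∑ m ∈ Finset.range (k + 1), (-1 : ℝ) ^ m * (k.choose m) / ((s+1) + m) := by
        rw [← Finset.sum_neg_distrib]
      rw [h2, h3]
      simp
      ring
    rw [expand, IH1, IH2]
    have hAne : (∏ i ∈ Finset.range (k + 1), (s + i)) ≠ 0 := Finset.prod_ne_zero_iff.2 hA
    have hBne : (∏ i ∈ Finset.range (k + 1), ((s+1) + i)) ≠ 0 := Finset.prod_ne_zero_iff.2 hB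
    have key : (∏ i ∈ Finset.range (k + 1), ((s+1) + i)) * s
        = (∏ i ∈ Finset.range (k + 1), (s + i)) * (s + ((k:ℝ)+1)) := by
      have e1 : ∏ i ∈ Finset.range (k + 2), (s + i)
          = (∏ i ∈ Finset.range (k + 1), (s + ((i+1:ℕ) : ℝ))) * (s + ((0:ℕ):ℝ)) :=
        Finset.prod_range_succ' (fun i => (s + (i:ℝ))) (k+1)
      have e2 : ∏ i ∈ Finset.range (k + 2), (s + i)
          = (∏ i ∈ Finset.range (k + 1), (s + i)) * (s + ((k+1 : ℕ):ℝ)) :=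
        Finset.prod_range_succ (fun i => (s + (i:ℝ))) (k+1)
      have e3 : (∏ i ∈ Finset.range (k + 1), (s + ((i+1:ℕ) : ℝ)))
          = ∏ i ∈ Finset.range (k + 1), ((s+1) + (i:ℝ)) := by
        exact Finset.prod_congr rfl (by intro i _; push_cast; ring)
      rw [e3] at e1
      rw [e1] at e2
      push_cast at e2
      rw [show s + ((0:ℝ)) = s by ring] at e2
      push_cast
      linarith [e2]
    have hprod2 : ∏ i ∈ Finset.range (k + 2), (s + i)
        = (∏ i ∈ Finset.range (k + 1), (s + i)) * (s + ((k+1 : ℕ):ℝ)) :=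
      Finset.prod_range_succ (fun i => (s + (i:ℝ))) (k+1)
    rw [hprod2, Nat.factorial_succ]
    push_cast
    field_simp
    linear_combination key



lemma Gamma_nz {x : ℝ} (h1 : -1 < x) (h0 : x ≠ 0) : Real.Gamma x ≠ 0 := by
  apply Real.Gamma_ne_zero
  intro m
  match m with
  | 0 => simpa using h0
  | (m+1) => intro h; rw [h] at h1; push_cast at h1; linarith

lemma Gamma_add_nat (x : ℝ) (k : ℕ) (h : ∀ i ∈ Finset.range k, x + i ≠ 0) :
    Real.Gamma (x + k) = Real.Gamma x * ∏ i ∈ Finset.range k, (x + i) := by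
  induction k with
  | zero => simp
  | succ j ih =>
    have hj : ∀ i ∈ Finset.range j, x + i ≠ 0 :=
      fun i hi => h i (Finset.mem_range.2 (Nat.lt_succ_of_lt (Finset.mem_range.1 hi)))
    have hxj : x + (j:ℝ) ≠ 0 := h j (by simp)
    have : x + ((j:ℕ)+1:ℕ) = (x + j) + 1 := by push_cast; ring
    rw [this, Real.Gamma_add_one hxj, ih hj, Finset.prod_range_succ]
    ring

/-- The vanishing hypergeometric-type sum, `j < n`. -/
lemma sum_zero {a b : ℝ} (ha : -1 < a) (hab : -2 < a + b) {j n : ℕ} (hjn : j < n) :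
    ∑ m ∈ Finset.range (n + 1), (-1 : ℝ) ^ m * (n.choose m) *
      (Real.Gamma (a + b + n + m + 1) * Real.Gamma (a + j + m + 1) /
        (Real.Gamma (a + m + 1) * Real.Gamma (a + b + j + m + 2))) = 0 := by
  obtain ⟨k, rfl⟩ : ∃ k, n = j + k + 1 := ⟨n - j - 1, by omega⟩
  set n := j + k + 1 with hn
  -- the polynomial of degree n - 1 = j + k
  set p : Polynomial ℝ :=
    (∏ i ∈ Finset.range k, (X + Polynomial.C (a + b + j + 2 + i))) *
      ∏ i ∈ Finset.range j, (X + Polynomial.C (a + 1 + i)) with hp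
  have hmono : p.Monic := by
    apply Polynomial.Monic.mul <;>
      exact Polynomial.monic_prod_of_monic _ _ (fun i _ => Polynomial.monic_X_add_C _)
  have hdeg : p.natDegree = k + j := by
    rw [hp, Polynomial.natDegree_mul (Polynomial.Monic.ne_zero (by
        exact Polynomial.monic_prod_of_monic _ _ (fun i _ => Polynomial.monic_X_add_C _)))
      (Polynomial.Monic.ne_zero (by
        exact Polynomial.monic_prod_of_monic _ _ (fun i _ => Polynomial.monic_X_add_C _)))]
    rw [Polynomial.natDegree_prod_of_monic _ _ (fun i _ => Polynomial.monic_X_add_C _),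
      Polynomial.natDegree_prod_of_monic _ _ (fun i _ => Polynomial.monic_X_add_C _)]
    simp only [Polynomial.natDegree_X_add_C, Finset.sum_const, smul_eq_mul, mul_one,
      Finset.card_range]
  have hdlt : p.degree < (n : ℕ) := by
    rw [Polynomial.degree_eq_natDegree hmono.ne_zero, hdeg]
    exact_mod_cast (by omega : k + j < n)
  have key := alt_sum_eval n p hdlt
  rw [← key]
  apply Finset.sum_congr rfl
  intro m hm
  -- rewrite the Gamma ratio as p.eval m
  have hG1 : Real.Gamma (a + b + (n:ℝ) + m + 1)
      = Real.Gamma (a + b + j + m + 2) * ∏ i ∈ Finset.range k, ((a + b + j + m + 2) + i) := by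
    have harg : a + b + (n:ℝ) + m + 1 = (a + b + j + m + 2) + (k : ℕ) := by
      rw [hn]; push_cast; ring
    rw [harg, Gamma_add_nat]
    intro i hi
    have : (0:ℝ) < a + b + j + m + 2 + i := by
      have : (0:ℝ) ≤ (j:ℝ) + m + i := by positivity
      linarith
    linarith
  have hG2 : Real.Gamma (a + (j:ℝ) + m + 1)
      = Real.Gamma (a + m + 1) * ∏ i ∈ Finset.range j, ((a + m + 1) + i) := by
    have harg : a + (j:ℝ) + m + 1 = (a + m + 1) + (j : ℕ) := by push_cast; ring
    rw [harg, Gamma_add_nat]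
    intro i hi
    have : (0:ℝ) ≤ (m:ℝ) + i := by positivity
    linarith
  have hGm : Real.Gamma (a + m + 1) ≠ 0 := by
    apply ne_of_gt; apply Real.Gamma_pos_of_pos
    have : (0:ℝ) ≤ (m:ℝ) := by positivity
    linarith
  have hGjm : Real.Gamma (a + b + j + m + 2) ≠ 0 := by
    apply ne_of_gt; apply Real.Gamma_pos_of_pos
    have : (0:ℝ) ≤ (j:ℝ) + m := by positivity
    linarith
  have heval : p.eval (m:ℝ)
      = (∏ i ∈ Finset.range k, ((a + b + j + m + 2) + i))
        * ∏ i ∈ Finset.range j, ((a + m + 1) + i) := by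
    rw [hp]
    simp only [Polynomial.eval_mul, Polynomial.eval_prod, Polynomial.eval_add,
      Polynomial.eval_X, Polynomial.eval_C]
    congr 1
    · exact Finset.prod_congr rfl (by intro i _; ring)
    · exact Finset.prod_congr rfl (by intro i _; ring)
  rw [hG1, hG2, heval]
  field_simp

/-- The value of the sum for `j = n`. -/
lemma sum_top {a b : ℝ} (ha : -1 < a) (hab : -2 < a + b) (n : ℕ)
    (hs : a + b + 2 * n + 1 ≠ 0) :
    ∑ m ∈ Finset.range (n + 1), (-1 : ℝ) ^ m * (n.choose m) *
      (Real.Gamma (a + b + n + m + 1) * Real.Gamma (a + n + m + 1) /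
        (Real.Gamma (a + m + 1) * Real.Gamma (a + b + n + m + 2))) =
    ((-1:ℝ)^n * ∏ i ∈ Finset.range n, (b + 1 + i)) * n.factorial /
      ∏ i ∈ Finset.range (n + 1), ((a + b + n + 1) + i) := by
  set s : ℝ := a + b + n + 1 with hsdef
  have hsne : ∀ i ∈ Finset.range (n + 1), s + (i:ℝ) ≠ 0 := by
    intro i hi hcon
    rcases Nat.eq_zero_or_pos (n + i) with h | h
    · obtain ⟨hn0, hi0⟩ : n = 0 ∧ i = 0 := by omega
      apply hs
      subst hn0; subst hi0
      simp only [hsdef] at hcon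
      push_cast at hcon ⊢
      linarith
    · have h1 : (1:ℝ) ≤ (n:ℝ) + i := by exact_mod_cast h
      have h2 : (0:ℝ) < s + i := by simp only [hsdef]; push_cast; linarith
      linarith
  set p : Polynomial ℝ := ∏ i ∈ Finset.range n, (X + Polynomial.C (a + 1 + i)) with hp
  have hmono : p.Monic := Polynomial.monic_prod_of_monic _ _ (fun i _ => Polynomial.monic_X_add_C _)
  have hdeg : p.natDegree = n := by
    rw [hp, Polynomial.natDegree_prod_of_monic _ _ (fun i _ => Polynomial.monic_X_add_C _)]
    simp only [Polynomial.natDegree_X_add_C, Finset.sum_const, smul_eq_mul, mul_one,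
      Finset.card_range]
  -- division with remainder at -s
  obtain ⟨q, hq⟩ := Polynomial.X_sub_C_dvd_sub_C_eval (a := -s) (p := p)
  have hqd : q.degree < (n:ℕ) := by
    rcases eq_or_ne q 0 with rfl | hq0
    · exact (by exact_mod_cast WithBot.bot_lt_coe _ : (⊥ : WithBot ℕ) < ((n:ℕ) : WithBot ℕ))
    · have hdm : (Polynomial.X - Polynomial.C (-s)) * q = p - Polynomial.C (p.eval (-s)) := hq.symm
      have hlhs : ((Polynomial.X - Polynomial.C (-s)) * q).degree = 1 + q.degree := by
        rw [Polynomial.degree_mul, Polynomial.degree_X_sub_C]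
      have hrhs : (p - Polynomial.C (p.eval (-s))).degree ≤ (n : ℕ) := by
        apply le_trans (Polynomial.degree_sub_le _ _)
        apply max_le
        · rw [Polynomial.degree_eq_natDegree hmono.ne_zero, hdeg]
        · exact le_trans Polynomial.degree_C_le (by exact_mod_cast Nat.cast_nonneg' n)
      rw [hdm, Polynomial.degree_eq_natDegree hq0] at hlhs
      have : 1 + (q.natDegree : WithBot ℕ) ≤ (n:ℕ) := hlhs ▸ hrhs
      rw [Polynomial.degree_eq_natDegree hq0]
      have hqn : q.natDegree + 1 ≤ n := by exact_mod_cast (by rw [add_comm] at this; exact_mod_cast this)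
      exact_mod_cast (by omega : q.natDegree < n)
  have hkey0 := alt_sum_eval n q hqd
  have hkeyinv := alt_sum_inv n s hsne
  -- per-term rewrite
  have hterm : ∀ m ∈ Finset.range (n + 1),
      (-1 : ℝ) ^ m * (n.choose m) *
        (Real.Gamma (a + b + n + m + 1) * Real.Gamma (a + n + m + 1) /
          (Real.Gamma (a + m + 1) * Real.Gamma (a + b + n + m + 2)))
      = (-1 : ℝ) ^ m * (n.choose m) * q.eval (m:ℝ)
        + p.eval (-s) * ((-1 : ℝ) ^ m * (n.choose m) / (s + m)) := by
    intro m hm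
    have hsm : s + (m:ℝ) ≠ 0 := hsne m hm
    have hG1 : Real.Gamma (a + b + (n:ℝ) + m + 2) = (s + m) * Real.Gamma (a + b + n + m + 1) := by
      have harg : a + b + (n:ℝ) + m + 2 = (a + b + n + m + 1) + 1 := by ring
      rw [harg, Real.Gamma_add_one (by simpa [hsdef] using (by
        intro hcon; exact hsm (by simp only [hsdef]; linarith) : ¬ a + b + (n:ℝ) + m + 1 = 0))]
      congr 1
      simp only [hsdef]; ring
    have hG2 : Real.Gamma (a + (n:ℝ) + m + 1)
        = Real.Gamma (a + m + 1) * ∏ i ∈ Finset.range n, ((a + m + 1) + i) := by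
      have harg : a + (n:ℝ) + m + 1 = (a + m + 1) + (n : ℕ) := by push_cast; ring
      rw [harg, Gamma_add_nat]
      intro i hi
      have : (0:ℝ) ≤ (m:ℝ) + i := by positivity
      linarith
    have hGm : Real.Gamma (a + m + 1) ≠ 0 := by
      apply ne_of_gt; apply Real.Gamma_pos_of_pos
      have : (0:ℝ) ≤ (m:ℝ) := by positivity
      linarith
    have hGn1 : Real.Gamma (a + b + (n:ℝ) + m + 1) ≠ 0 := by
      -- a+b+n+m+1 = s + m ≠ 0 and > -1
      apply Gamma_nz
      · have h1 : (0:ℝ) ≤ (n:ℝ) + m := by positivity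
        linarith
      · intro hcon; exact hsm (by simp only [hsdef]; linarith)
    have heval : p.eval (m:ℝ) = ∏ i ∈ Finset.range n, ((a + m + 1) + i) := by
      rw [hp]
      simp only [Polynomial.eval_prod, Polynomial.eval_add, Polynomial.eval_X, Polynomial.eval_C]
      exact Finset.prod_congr rfl (by intro i _; ring)
    have hqm : p.eval (m:ℝ) - p.eval (-s) = ((m:ℝ) + s) * q.eval (m:ℝ) := by
      have := congrArg (Polynomial.eval (m:ℝ)) hq
      simpa using this
    rw [hG1, hG2, ← heval]
    rw [show p.eval (m:ℝ) = ((m:ℝ) + s) * q.eval (m:ℝ) + p.eval (-s) by linarith [hqm]]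
    field_simp
    ring
  rw [Finset.sum_congr rfl hterm, Finset.sum_add_distrib, hkey0, zero_add,
    ← Finset.mul_sum, hkeyinv]
  have hpeval : p.eval (-s) = (-1:ℝ)^n * ∏ i ∈ Finset.range n, (b + 1 + i) := by
    rw [hp]
    simp only [Polynomial.eval_prod, Polynomial.eval_add, Polynomial.eval_X, Polynomial.eval_C]
    have hthis : ∀ i ∈ Finset.range n, -s + (a + 1 + i) = (-1) * (b + (n:ℝ) - i) := by
      intro i _; simp only [hsdef]; push_cast; ring
    rw [Finset.prod_congr rfl hthis, Finset.prod_mul_distrib, Finset.prod_const,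
      Finset.card_range]
    congr 1
    rw [← Finset.prod_range_reflect (fun j => b + 1 + (j:ℝ)) n]
    apply Finset.prod_congr rfl
    intro i hi
    have hi' : i < n := Finset.mem_range.1 hi
    have hc : ((n - 1 - i : ℕ) : ℝ) = (n:ℝ) - 1 - i := by
      push_cast [Nat.cast_sub (show 1 ≤ n by omega), Nat.cast_sub (show i ≤ n - 1 by omega)]
      ring
    simp only [hc]
    ring
  rw [hpeval]
  ring


lemma realBeta {u v : ℝ} (hu : -1 < u) (hv : -1 < v) :
    IntervalIntegrable (fun x : ℝ => x ^ u * (1-x) ^ v) volume 0 1 ∧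
    ∫ x in (0:ℝ)..1, x ^ u * (1-x) ^ v
      = Real.Gamma (u+1) * Real.Gamma (v+1) / Real.Gamma (u+v+2) := by
  have hu' : (0:ℝ) < u + 1 := by linarith
  have hv' : (0:ℝ) < v + 1 := by linarith
  have hrecu : (0:ℝ) < ((((u+1:ℝ)):ℂ)).re := by simpa using hu'
  have hrecv : (0:ℝ) < ((((v+1:ℝ)):ℂ)).re := by simpa using hv'
  have hEq : Set.EqOn (fun x:ℝ => (x:ℂ) ^ (((u+1:ℝ):ℂ)-1) * ((1:ℂ)-(x:ℂ)) ^ (((v+1:ℝ):ℂ)-1))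
      (fun x:ℝ => (((x ^ u * (1-x) ^ v : ℝ)) : ℂ)) (Set.uIcc 0 1) := by
    intro x hx
    rw [Set.uIcc_of_le (by norm_num : (0:ℝ) ≤ 1)] at hx
    have hx0 : (0:ℝ) ≤ x := hx.1
    have hx1 : (0:ℝ) ≤ 1 - x := by linarith [hx.2]
    have e1 : (((u+1:ℝ):ℂ)-1) = ((u:ℝ):ℂ) := by push_cast; ring
    have e2 : (((v+1:ℝ):ℂ)-1) = ((v:ℝ):ℂ) := by push_cast; ring
    have e3 : ((1:ℂ)-(x:ℂ)) = (((1-x:ℝ)):ℂ) := by push_cast; ring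
    simp only [e1, e2, e3]
    rw [← Complex.ofReal_cpow hx0, ← Complex.ofReal_cpow hx1]
    push_cast
    ring
  have hconv := Complex.betaIntegral_convergent hrecu hrecv
  constructor
  · rw [intervalIntegrable_iff] at hconv ⊢
    have h2 : IntegrableOn (fun x:ℝ => (((x ^ u * (1-x) ^ v : ℝ)) : ℂ))
        (Set.uIoc (0:ℝ) 1) volume := by
      apply hconv.congr_fun _ measurableSet_uIoc
      intro x hx
      exact hEq (Set.uIoc_subset_uIcc hx)
    have h3 := h2.re
    apply h3.congr
    refine Filter.Eventually.of_forall (fun x => by simp)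
  · have hG := Complex.Gamma_mul_Gamma_eq_betaIntegral hrecu hrecv
    have hBeta : Complex.betaIntegral ((u+1:ℝ):ℂ) ((v+1:ℝ):ℂ)
        = ((∫ x in (0:ℝ)..1, x ^ u * (1-x) ^ v : ℝ) : ℂ) := by
      rw [Complex.betaIntegral]
      rw [intervalIntegral.integral_congr hEq]
      exact intervalIntegral.integral_ofReal
    rw [hBeta, Complex.Gamma_ofReal, Complex.Gamma_ofReal] at hG
    have harg : ((u+1:ℝ):ℂ) + ((v+1:ℝ):ℂ) = ((u+v+2:ℝ):ℂ) := by push_cast; ring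
    rw [harg, Complex.Gamma_ofReal] at hG
    have hG' : Real.Gamma (u+1) * Real.Gamma (v+1)
        = Real.Gamma (u+v+2) * ∫ x in (0:ℝ)..1, x ^ u * (1-x) ^ v := by
      exact_mod_cast hG
    have hGne : Real.Gamma (u+v+2) ≠ 0 := ne_of_gt (Real.Gamma_pos_of_pos (by linarith))
    field_simp [hGne] at hG' ⊢
    linarith [hG']

lemma weight_int {p q : ℝ} (hp : -1 < p) (hq : -1 < q) :
    IntegrableOn (fun x : ℝ => (1-x) ^ p * (1+x) ^ q) (Set.Ioo (-1:ℝ) 1) volume ∧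
    ∫ x in Set.Ioo (-1:ℝ) 1, (1-x) ^ p * (1+x) ^ q
      = 2 ^ (p+q+1) * Real.Gamma (p+1) * Real.Gamma (q+1) / Real.Gamma (p+q+2) := by
  have hii : IntervalIntegrable (fun x : ℝ => (1-x) ^ p * (1+x) ^ q) volume (-1) 1 := by
    have left : IntervalIntegrable (fun x : ℝ => (1-x) ^ p * (1+x) ^ q) volume (-1) 0 := by
      have h1 : IntervalIntegrable (fun x : ℝ => (x+1) ^ q) volume (-1) 0 := by
        have := (intervalIntegral.intervalIntegrable_rpow' (a := 0) (b := 1) hq).comp_add_right 1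
        simpa using this
      have h1' : IntervalIntegrable (fun x : ℝ => (1+x) ^ q) volume (-1) 0 := by
        simpa only [add_comm] using h1
      have h2 : ContinuousOn (fun x : ℝ => (1-x) ^ p) (Set.uIcc (-1:ℝ) 0) := by
        apply ContinuousOn.rpow_const (by fun_prop)
        intro x hx
        rw [Set.uIcc_of_le (by norm_num : (-1:ℝ) ≤ 0)] at hx
        left; nlinarith [hx.2]
      have := h1'.mul_continuousOn h2
      simpa only [mul_comm] using this
    have right : IntervalIntegrable (fun x : ℝ => (1-x) ^ p * (1+x) ^ q) volume 0 1 := by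
      have h1 : IntervalIntegrable (fun x : ℝ => (1-x) ^ p) volume 0 1 := by
        have := (intervalIntegral.intervalIntegrable_rpow' (a := 0) (b := 1) hp).comp_sub_left 1
        simpa using this.symm
      have h2 : ContinuousOn (fun x : ℝ => (1+x) ^ q) (Set.uIcc (0:ℝ) 1) := by
        apply ContinuousOn.rpow_const (by fun_prop)
        intro x hx
        rw [Set.uIcc_of_le (by norm_num : (0:ℝ) ≤ 1)] at hx
        left; nlinarith [hx.1]
      exact h1.mul_continuousOn h2
    exact left.trans right
  constructor
  · have := intervalIntegrable_iff.1 hii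
    rw [Set.uIoc_of_le (by norm_num : (-1:ℝ) ≤ 1)] at this
    exact this.mono_set Set.Ioo_subset_Ioc_self
  · rw [← MeasureTheory.integral_Ioc_eq_integral_Ioo,
      ← intervalIntegral.integral_of_le (by norm_num : (-1:ℝ) ≤ 1)]
    have hsub := intervalIntegral.integral_comp_mul_add
      (a := (0:ℝ)) (b := 1) (f := fun x : ℝ => (1-x) ^ p * (1+x) ^ q)
      (by norm_num : (2:ℝ) ≠ 0) (-1)
    have hend : (2:ℝ) * 0 + -1 = -1 := by norm_num
    have hend2 : (2:ℝ) * 1 + -1 = 1 := by norm_num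
    rw [hend, hend2] at hsub
    -- hsub : ∫ x in 0..1, f (2x + -1) = 2⁻¹ • ∫ x in -1..1, f x
    have hmain : ∫ x in (-1:ℝ)..1, (1-x) ^ p * (1+x) ^ q
        = 2 * ∫ t in (0:ℝ)..1, (1-(2*t + -1)) ^ p * (1+(2*t + -1)) ^ q := by
      rw [hsub, smul_eq_mul]
      ring
    rw [hmain]
    have hcongr : Set.EqOn (fun t : ℝ => (1-(2*t + -1)) ^ p * (1+(2*t + -1)) ^ q)
        (fun t : ℝ => (2:ℝ)^p * (2:ℝ)^q * (t ^ q * (1-t) ^ p)) (Set.uIcc 0 1) := by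
      intro t ht
      rw [Set.uIcc_of_le (by norm_num : (0:ℝ) ≤ 1)] at ht
      show (1-(2*t + -1)) ^ p * (1+(2*t + -1)) ^ q = (2:ℝ)^p * (2:ℝ)^q * (t ^ q * (1-t) ^ p)
      have ht0 : (0:ℝ) ≤ t := ht.1
      have ht1 : (0:ℝ) ≤ 1 - t := by linarith [ht.2]
      have e1 : (1-(2*t + -1)) = 2 * (1-t) := by ring
      have e2 : (1+(2*t + -1)) = 2 * t := by ring
      rw [e1, e2, Real.mul_rpow (by norm_num) ht1, Real.mul_rpow (by norm_num) ht0]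
      ring
    rw [intervalIntegral.integral_congr hcongr, intervalIntegral.integral_const_mul,
      (realBeta hq hp).2]
    rw [show q + p + 2 = p + q + 2 by ring, show (2:ℝ)^(p+q+1) = 2 * ((2:ℝ)^p * (2:ℝ)^q) by
      rw [show p+q+1 = p+q+1 from rfl, Real.rpow_add (by norm_num : (0:ℝ) < 2),
        Real.rpow_add (by norm_num : (0:ℝ) < 2), Real.rpow_one]; ring]
    ring

lemma pow_weight_int {a b : ℝ} (ha : -1 < a) (hb : -1 < b) (k : ℕ) :
    IntegrableOn (fun x : ℝ => (x-1) ^ k * ((1-x) ^ a * (1+x) ^ b))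
      (Set.Ioo (-1:ℝ) 1) volume ∧
    ∫ x in Set.Ioo (-1:ℝ) 1, (x-1) ^ k * ((1-x) ^ a * (1+x) ^ b)
      = (-1) ^ k * (2 ^ (a+b+(k:ℝ)+1) * Real.Gamma (a+k+1) * Real.Gamma (b+1) /
          Real.Gamma (a+b+k+2)) := by
  have hak : -1 < a + (k:ℝ) := by
    have : (0:ℝ) ≤ (k:ℝ) := by positivity
    linarith
  have W2 := weight_int hak hb
  have hEq : Set.EqOn (fun x : ℝ => (-1:ℝ)^k * ((1-x) ^ (a+(k:ℝ)) * (1+x) ^ b))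
      (fun x : ℝ => (x-1) ^ k * ((1-x) ^ a * (1+x) ^ b)) (Set.Ioo (-1:ℝ) 1) := by
    intro x hx
    show (-1:ℝ)^k * ((1-x) ^ (a+(k:ℝ)) * (1+x) ^ b) = (x-1) ^ k * ((1-x) ^ a * (1+x) ^ b)
    have h1x : (0:ℝ) < 1 - x := by linarith [hx.2]
    have e1 : (x-1) ^ k = (-1:ℝ)^k * (1-x)^k := by
      rw [show x - 1 = -(1-x) by ring, neg_pow]
    have e2 : (1-x) ^ (a+(k:ℝ)) = (1-x)^a * (1-x)^(k:ℕ) := by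
      rw [← Real.rpow_natCast (1-x) k, ← Real.rpow_add h1x]
    rw [e1, e2]
    ring
  constructor
  · have hI : IntegrableOn (fun x : ℝ => (-1:ℝ)^k * ((1-x) ^ (a+(k:ℝ)) * (1+x) ^ b))
        (Set.Ioo (-1:ℝ) 1) volume := W2.1.const_mul ((-1:ℝ)^k)
    exact hI.congr_fun hEq measurableSet_Ioo
  · rw [← MeasureTheory.setIntegral_congr_fun measurableSet_Ioo hEq,
      MeasureTheory.integral_const_mul, W2.2]
    rw [show a + (k:ℝ) + b + 1 = a + b + (k:ℝ) + 1 by ring,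
      show a + (k:ℝ) + b + 2 = a + b + (k:ℝ) + 2 by ring]

lemma poly_weight_integrable {a b : ℝ} (ha : -1 < a) (hb : -1 < b) (r : Polynomial ℝ) :
    IntegrableOn (fun x : ℝ => r.eval x * ((1-x) ^ a * (1+x) ^ b))
      (Set.Ioo (-1:ℝ) 1) volume := by
  obtain ⟨C, hC⟩ := (isCompact_Icc (a := (-1:ℝ)) (b := 1)).exists_bound_of_continuousOn
      (r.continuous_aeval.continuousOn)
  set f : ℝ → ℝ := fun x => r.eval (max (-1) (min 1 x)) with hf
  have hfc : Continuous f :=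
    r.continuous.comp (continuous_const.max (continuous_const.min continuous_id))
  have hbd : ∀ x, ‖f x‖ ≤ C := by
    intro x
    apply hC
    constructor
    · exact le_max_left _ _
    · exact max_le (by norm_num) (min_le_left _ _)
  have hint := Integrable.bdd_mul (weight_int ha hb).1 hfc.aestronglyMeasurable (Filter.Eventually.of_forall hbd)
  have hI : IntegrableOn (fun x : ℝ => f x * ((1-x) ^ a * (1+x) ^ b))
      (Set.Ioo (-1:ℝ) 1) volume := hint
  apply hI.congr_fun _ measurableSet_Ioo
  intro x hx
  show f x * ((1-x) ^ a * (1+x) ^ b) = Polynomial.eval x r * ((1-x) ^ a * (1+x) ^ b)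
  simp only [hf]
  rw [min_eq_right (le_of_lt hx.2), max_eq_right (le_of_lt hx.1)]

lemma degree_sum_lt (s : Finset ℕ) (c : ℕ → ℝ) (N : ℕ) (h : ∀ m ∈ s, m < N) :
    (∑ m ∈ s, Polynomial.C (c m) * (Polynomial.X - 1) ^ m).degree < (N : WithBot ℕ) := by
  apply lt_of_le_of_lt (Polynomial.degree_sum_le _ _)
  rw [Finset.sup_lt_iff (by exact_mod_cast WithBot.bot_lt_coe N)]
  intro m hm
  apply lt_of_le_of_lt (Polynomial.degree_mul_le _ _)
  have h1 : (Polynomial.C (c m)).degree ≤ 0 := Polynomial.degree_C_le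
  have h2 : ((Polynomial.X - 1 : Polynomial ℝ) ^ m).degree ≤ (m : ℕ) := by
    rw [show (Polynomial.X - 1 : Polynomial ℝ) = Polynomial.X - Polynomial.C 1 by
      rw [Polynomial.C_1]]
    apply le_trans (Polynomial.degree_pow_le _ _)
    rw [Polynomial.degree_X_sub_C]
    simp
  calc (Polynomial.C (c m)).degree + ((Polynomial.X - 1 : Polynomial ℝ) ^ m).degree
      ≤ 0 + (m : ℕ) := add_le_add h1 h2
    _ = (m : ℕ) := by rw [zero_add]
    _ < (N : ℕ) := by exact_mod_cast h m hm

lemma jacobi_monic {α β : ℝ} (hα : -1 < α) (hab : -2 < α + β) (n : ℕ)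
    (hΓ : α + β + 2*(n:ℝ) + 1 ≠ 0) :
    (jacobiP α β n).Monic ∧ (jacobiP α β n).degree = (n:ℕ) ∧ (jacobiP α β n).natDegree = n := by
  have hn0 : (0:ℝ) ≤ (n:ℝ) := by positivity
  have hΓ2 : Real.Gamma (α + β + 2*(n:ℝ) + 1) ≠ 0 := Gamma_nz (by linarith) hΓ
  have hΓa : Real.Gamma (α + (n:ℝ) + 1) ≠ 0 :=
    ne_of_gt (Real.Gamma_pos_of_pos (by linarith))
  have hctop : (2:ℝ)^n * (Real.Gamma (α + n + 1) / Real.Gamma (α + β + 2 * n + 1)) *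
      ((n.choose n : ℕ) : ℝ) * (Real.Gamma (α + β + (n:ℝ) + n + 1) / Real.Gamma (α + n + 1)) *
      ((1:ℝ)/2)^n = 1 := by
    rw [Nat.choose_self, show α + β + (n:ℝ) + n + 1 = α + β + 2*(n:ℝ) + 1 by ring]
    have h2 : (2:ℝ)^n * ((1:ℝ)/2)^n = 1 := by
      rw [← mul_pow]; norm_num
    field_simp
    rw [Nat.cast_one, mul_one, mul_right_comm, mul_div_assoc,
      div_self (by rw [mul_comm (n:ℝ) 2]; exact hΓ2), mul_one, h2]
  have hsplit : jacobiP α β n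
      = (∑ m ∈ Finset.range n, Polynomial.C ((2:ℝ) ^ n *
          (Real.Gamma (α + n + 1) / Real.Gamma (α + β + 2 * n + 1)) *
          (n.choose m) * (Real.Gamma (α + β + n + m + 1) / Real.Gamma (α + m + 1)) *
          ((1 : ℝ) / 2) ^ m) * (Polynomial.X - 1) ^ m) + (Polynomial.X - 1) ^ n := by
    rw [jacobiP, Finset.sum_range_succ]
    congr 1
    rw [hctop, Polynomial.C_1, one_mul]
  have hmonpow : ((Polynomial.X - 1 : Polynomial ℝ) ^ n).Monic := by
    rw [show (Polynomial.X - 1 : Polynomial ℝ) = Polynomial.X - Polynomial.C 1 by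
      rw [Polynomial.C_1]]
    exact (Polynomial.monic_X_sub_C 1).pow n
  have hdegpow : ((Polynomial.X - 1 : Polynomial ℝ) ^ n).degree = (n:ℕ) := by
    rw [show (Polynomial.X - 1 : Polynomial ℝ) = Polynomial.X - Polynomial.C 1 by
      rw [Polynomial.C_1]]
    rw [Polynomial.degree_pow, Polynomial.degree_X_sub_C]
    simp
  have hlt : (∑ m ∈ Finset.range n, Polynomial.C ((2:ℝ) ^ n *
          (Real.Gamma (α + n + 1) / Real.Gamma (α + β + 2 * n + 1)) *
          (n.choose m) * (Real.Gamma (α + β + n + m + 1) / Real.Gamma (α + m + 1)) *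
          ((1 : ℝ) / 2) ^ m) * (Polynomial.X - 1) ^ m).degree
      < ((Polynomial.X - 1 : Polynomial ℝ) ^ n).degree := by
    rw [hdegpow]
    exact degree_sum_lt _ _ _ (fun m hm => Finset.mem_range.1 hm)
  have hmon : (jacobiP α β n).Monic := by
    rw [hsplit]
    exact hmonpow.add_of_right hlt
  have hdeg : (jacobiP α β n).degree = (n:ℕ) := by
    rw [hsplit, Polynomial.degree_add_eq_right_of_degree_lt hlt, hdegpow]
  exact ⟨hmon, hdeg, Polynomial.natDegree_eq_of_degree_eq_some hdeg⟩

lemma jacobi_degree_le (α β : ℝ) (n : ℕ) : (jacobiP α β n).degree ≤ (n:ℕ) := by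
  rw [jacobiP]
  apply le_trans (Polynomial.degree_sum_le _ _)
  rw [Finset.sup_le_iff]
  intro m hm
  apply le_trans (Polynomial.degree_mul_le _ _)
  have h1 : (Polynomial.C ((2 : ℝ) ^ n * (Real.Gamma (α + n + 1) /
      Real.Gamma (α + β + 2 * n + 1)) * (n.choose m) *
      (Real.Gamma (α + β + n + m + 1) / Real.Gamma (α + m + 1)) *
      ((1 : ℝ) / 2) ^ m)).degree ≤ 0 := Polynomial.degree_C_le
  have h2 : ((Polynomial.X - 1 : Polynomial ℝ) ^ m).degree ≤ (m : ℕ) := by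
    rw [show (Polynomial.X - 1 : Polynomial ℝ) = Polynomial.X - Polynomial.C 1 by
      rw [Polynomial.C_1]]
    apply le_trans (Polynomial.degree_pow_le _ _)
    rw [Polynomial.degree_X_sub_C]
    simp
  calc _ ≤ (0 : WithBot ℕ) + (m : ℕ) := add_le_add h1 h2
    _ = ((m:ℕ) : WithBot ℕ) := by rw [zero_add]
    _ ≤ ((n:ℕ) : WithBot ℕ) := by exact_mod_cast Nat.lt_succ_iff.1 (Finset.mem_range.1 hm)

lemma pow_weight_int2 {a b : ℝ} (ha : -1 < a) (hb : -1 < b) (k : ℕ) :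
    ∫ x in Set.Ioo (-1:ℝ) 1, (x-1) ^ k * ((1-x) ^ a * (1+x) ^ b)
      = (-1) ^ k * (2:ℝ) ^ k * ((2:ℝ) ^ (a+b+1) * Real.Gamma (a+k+1) * Real.Gamma (b+1) /
          Real.Gamma (a+b+k+2)) := by
  rw [(pow_weight_int ha hb k).2,
    show a+b+(k:ℝ)+1 = (a+b+1)+(k:ℝ) by ring,
    Real.rpow_add (by norm_num : (0:ℝ) < 2), Real.rpow_natCast]
  ring

/-- Orthogonality of `jacobiP a b n` against `(x-1)^j` for `j < n`. -/
lemma orth_basis {a b : ℝ} (ha : -1 < a) (hb : -1 < b) {j n : ℕ} (hjn : j < n) :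
    ∫ x in Set.Ioo (-1:ℝ) 1,
      (x-1)^j * (Polynomial.eval x (jacobiP a b n)) * ((1-x)^a * (1+x)^b) = 0 := by
  have hexp : ∀ x ∈ Set.Ioo (-1:ℝ) 1,
      (x-1)^j * (Polynomial.eval x (jacobiP a b n)) * ((1-x)^a*(1+x)^b)
      = ∑ m ∈ Finset.range (n+1), ((2:ℝ) ^ n * (Real.Gamma (a + n + 1) /
          Real.Gamma (a + b + 2 * n + 1)) * (n.choose m) *
          (Real.Gamma (a + b + n + m + 1) / Real.Gamma (a + m + 1)) * ((1 : ℝ) / 2) ^ m)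
          * ((x-1)^(j+m) * ((1-x)^a*(1+x)^b)) := by
    intro x _
    rw [jacobiP, Polynomial.eval_finset_sum, Finset.mul_sum, Finset.sum_mul]
    apply Finset.sum_congr rfl
    intro m _
    rw [Polynomial.eval_mul, Polynomial.eval_C, Polynomial.eval_pow, Polynomial.eval_sub,
      Polynomial.eval_X, Polynomial.eval_one, pow_add]
    ring
  rw [MeasureTheory.setIntegral_congr_fun measurableSet_Ioo hexp]
  rw [MeasureTheory.integral_finset_sum _
    (fun m _ => ((pow_weight_int ha hb (j+m)).1.const_mul _))]
  have hval : ∀ m ∈ Finset.range (n+1),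
      ((2:ℝ) ^ n * (Real.Gamma (a + n + 1) / Real.Gamma (a + b + 2 * n + 1)) * (n.choose m) *
        (Real.Gamma (a + b + n + m + 1) / Real.Gamma (a + m + 1)) * ((1 : ℝ) / 2) ^ m)
        * (∫ x in Set.Ioo (-1:ℝ) 1, (x-1)^(j+m) * ((1-x)^a*(1+x)^b))
      = ((2:ℝ) ^ n * (Real.Gamma (a + n + 1) / Real.Gamma (a + b + 2 * n + 1)) * ((-1:ℝ)^j *
          (2:ℝ)^j * ((2:ℝ)^(a+b+1) * Real.Gamma (b+1))))
        * ((-1 : ℝ) ^ m * (n.choose m) *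
          (Real.Gamma (a + b + n + m + 1) * Real.Gamma (a + j + m + 1) /
            (Real.Gamma (a + m + 1) * Real.Gamma (a + b + j + m + 2)))) := by
    intro m _
    rw [pow_weight_int2 ha hb (j+m)]
    have hhalf : ((1:ℝ)/2)^m * (2:ℝ)^m = 1 := by
      rw [← mul_pow]; norm_num
    push_cast
    rw [pow_add, pow_add]
    ring_nf
    linear_combination (Real.Gamma (1+a+(n:ℝ)) * (Real.Gamma (1+a+(n:ℝ)*2+b))⁻¹ *
      ((n.choose m : ℕ):ℝ) * Real.Gamma (1+a+(n:ℝ)+b+(m:ℝ)) * (Real.Gamma (1+a+(m:ℝ)))⁻¹ *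
      (2:ℝ)^(1+a+b) * Real.Gamma (1+a+(m:ℝ)+(j:ℝ)) * Real.Gamma (1+b) *
      (Real.Gamma (2+a+b+(m:ℝ)+(j:ℝ)))⁻¹ * (-1:ℝ)^m * (-1:ℝ)^j * (2:ℝ)^n * (2:ℝ)^j) * hhalf
  simp only [MeasureTheory.integral_const_mul]
  rw [Finset.sum_congr rfl hval, ← Finset.mul_sum, sum_zero ha (by linarith) hjn, mul_zero]

lemma orth_poly {a b : ℝ} (ha : -1 < a) (hb : -1 < b) {n : ℕ} (q : Polynomial ℝ)
    (hq : q.degree < (n : WithBot ℕ)) :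
    ∫ x in Set.Ioo (-1:ℝ) 1,
      q.eval x * (Polynomial.eval x (jacobiP a b n)) * ((1-x)^a * (1+x)^b) = 0 := by
  rcases eq_or_ne q 0 with rfl | hq0
  · simp
  have hnd : q.natDegree < n := by
    rwa [Polynomial.natDegree_lt_iff_degree_lt hq0]
  have hrep : q = ∑ i ∈ Finset.range n,
      Polynomial.C ((Polynomial.taylor 1 q).coeff i) * (Polynomial.X - Polynomial.C 1)^i := by
    conv_lhs => rw [← Polynomial.sum_taylor_eq q 1]
    rw [Polynomial.sum_over_range' _ (fun i => by simp) n
      (by rw [Polynomial.natDegree_taylor]; exact hnd)]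
  have heval : ∀ x ∈ Set.Ioo (-1:ℝ) 1,
      q.eval x * (Polynomial.eval x (jacobiP a b n)) * ((1-x)^a * (1+x)^b)
      = ∑ i ∈ Finset.range n, (Polynomial.taylor 1 q).coeff i *
          ((x-1)^i * (Polynomial.eval x (jacobiP a b n)) * ((1-x)^a * (1+x)^b)) := by
    intro x _
    conv_lhs => rw [hrep]
    rw [Polynomial.eval_finset_sum, Finset.sum_mul, Finset.sum_mul]
    apply Finset.sum_congr rfl
    intro i _
    rw [Polynomial.eval_mul, Polynomial.eval_C, Polynomial.eval_pow, Polynomial.eval_sub,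
      Polynomial.eval_X, Polynomial.eval_C]
    ring
  rw [MeasureTheory.setIntegral_congr_fun measurableSet_Ioo heval]
  have hint : ∀ i : ℕ, IntegrableOn
      (fun x => (x-1)^i * (Polynomial.eval x (jacobiP a b n)) * ((1-x)^a * (1+x)^b))
      (Set.Ioo (-1:ℝ) 1) volume := by
    intro i
    apply (poly_weight_integrable ha hb ((Polynomial.X - Polynomial.C 1)^i * jacobiP a b n)).congr_fun
      _ measurableSet_Ioo
    intro x _
    show Polynomial.eval x ((Polynomial.X - Polynomial.C 1)^i * jacobiP a b n) *
        ((1-x)^a * (1+x)^b) = _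
    rw [Polynomial.eval_mul, Polynomial.eval_pow, Polynomial.eval_sub, Polynomial.eval_X,
      Polynomial.eval_C]
  rw [MeasureTheory.integral_finset_sum _ (fun i _ => (hint i).const_mul _)]
  apply Finset.sum_eq_zero
  intro i hi
  rw [MeasureTheory.integral_const_mul, orth_basis ha hb (Finset.mem_range.1 hi), mul_zero]

lemma norm_basis {a b : ℝ} (ha : -1 < a) (hb : -1 < b) (n : ℕ)
    (hs : a + b + 2*(n:ℝ) + 1 ≠ 0) :
    ∫ x in Set.Ioo (-1:ℝ) 1,
      (x-1)^n * (Polynomial.eval x (jacobiP a b n)) * ((1-x)^a * (1+x)^b)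
      = knorm a b n := by
  have hn0 : (0:ℝ) ≤ (n:ℝ) := by positivity
  have hexp : ∀ x ∈ Set.Ioo (-1:ℝ) 1,
      (x-1)^n * (Polynomial.eval x (jacobiP a b n)) * ((1-x)^a*(1+x)^b)
      = ∑ m ∈ Finset.range (n+1), ((2:ℝ) ^ n * (Real.Gamma (a + n + 1) /
          Real.Gamma (a + b + 2 * n + 1)) * (n.choose m) *
          (Real.Gamma (a + b + n + m + 1) / Real.Gamma (a + m + 1)) * ((1 : ℝ) / 2) ^ m)
          * ((x-1)^(n+m) * ((1-x)^a*(1+x)^b)) := by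
    intro x _
    rw [jacobiP, Polynomial.eval_finset_sum, Finset.mul_sum, Finset.sum_mul]
    apply Finset.sum_congr rfl
    intro m _
    rw [Polynomial.eval_mul, Polynomial.eval_C, Polynomial.eval_pow, Polynomial.eval_sub,
      Polynomial.eval_X, Polynomial.eval_one, pow_add]
    ring
  rw [MeasureTheory.setIntegral_congr_fun measurableSet_Ioo hexp]
  rw [MeasureTheory.integral_finset_sum _
    (fun m _ => ((pow_weight_int ha hb (n+m)).1.const_mul _))]
  have hval : ∀ m ∈ Finset.range (n+1),
      ((2:ℝ) ^ n * (Real.Gamma (a + n + 1) / Real.Gamma (a + b + 2 * n + 1)) * (n.choose m) *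
        (Real.Gamma (a + b + n + m + 1) / Real.Gamma (a + m + 1)) * ((1 : ℝ) / 2) ^ m)
        * (∫ x in Set.Ioo (-1:ℝ) 1, (x-1)^(n+m) * ((1-x)^a*(1+x)^b))
      = ((2:ℝ) ^ n * (Real.Gamma (a + n + 1) / Real.Gamma (a + b + 2 * n + 1)) * ((-1:ℝ)^n *
          (2:ℝ)^n * ((2:ℝ)^(a+b+1) * Real.Gamma (b+1))))
        * ((-1 : ℝ) ^ m * (n.choose m) *
          (Real.Gamma (a + b + n + m + 1) * Real.Gamma (a + n + m + 1) /
            (Real.Gamma (a + m + 1) * Real.Gamma (a + b + n + m + 2)))) := by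
    intro m _
    rw [pow_weight_int2 ha hb (n+m)]
    have hhalf : ((1:ℝ)/2)^m * (2:ℝ)^m = 1 := by
      rw [← mul_pow]; norm_num
    push_cast
    rw [pow_add, pow_add]
    ring_nf
    linear_combination (Real.Gamma (1+a+(n:ℝ)) * (Real.Gamma (1+a+(n:ℝ)*2+b))⁻¹ *
      ((n.choose m : ℕ):ℝ) * Real.Gamma (1+a+(n:ℝ)+b+(m:ℝ)) * (Real.Gamma (1+a+(m:ℝ)))⁻¹ *
      (2:ℝ)^(1+a+b) * Real.Gamma (1+a+(n:ℝ)+(m:ℝ)) * Real.Gamma (1+b) *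
      (Real.Gamma (2+a+(n:ℝ)+b+(m:ℝ)))⁻¹ * (-1:ℝ)^n * (-1:ℝ)^m * (2:ℝ)^(n*2)) * hhalf
  simp only [MeasureTheory.integral_const_mul]
  rw [Finset.sum_congr rfl hval, ← Finset.mul_sum, sum_top ha (by linarith) n hs]
  -- now pure Gamma algebra
  have hGb1 : Real.Gamma (b+1) ≠ 0 := ne_of_gt (Real.Gamma_pos_of_pos (by linarith))
  have hGa1 : Real.Gamma (a+(n:ℝ)+1) ≠ 0 := ne_of_gt (Real.Gamma_pos_of_pos (by linarith))
  have hG2 : Real.Gamma (a+b+2*(n:ℝ)+1) ≠ 0 := Gamma_nz (by linarith) hs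
  have habn : a + b + (n:ℝ) + 1 ≠ 0 := by
    intro h
    have h1 : (n:ℝ) < 1 := by linarith
    have h2 : n = 0 := by exact_mod_cast Nat.lt_one_iff.1 (by exact_mod_cast h1)
    apply hs
    rw [h2] at h ⊢
    push_cast at h ⊢
    linarith
  have hGabn : Real.Gamma (a+b+(n:ℝ)+1) ≠ 0 := Gamma_nz (by linarith) habn
  have hne : ∀ i ∈ Finset.range (n+1), (a+b+(n:ℝ)+1) + (i:ℝ) ≠ 0 := by
    intro i hi hcon
    rcases Nat.eq_zero_or_pos (n + i) with h | h
    · obtain ⟨h3, h4⟩ : n = 0 ∧ i = 0 := by omega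
      apply hs
      rw [h3] at hcon ⊢
      rw [h4] at hcon
      push_cast at hcon ⊢
      linarith
    · have h1 : (1:ℝ) ≤ (n:ℝ) + i := by exact_mod_cast h
      linarith
  have hQ : (∏ i ∈ Finset.range (n+1), ((a+b+(n:ℝ)+1) + (i:ℝ)))
      = Real.Gamma (a+b+2*(n:ℝ)+2) / Real.Gamma (a+b+(n:ℝ)+1) := by
    have h := Gamma_add_nat (a+b+(n:ℝ)+1) (n+1) hne
    rw [show (a+b+(n:ℝ)+1) + ((n+1:ℕ):ℝ) = a+b+2*(n:ℝ)+2 by push_cast; ring] at h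
    rw [h]
    field_simp
  have hPn : (∏ i ∈ Finset.range n, (b + 1 + (i:ℝ)))
      = Real.Gamma (b+(n:ℝ)+1) / Real.Gamma (b+1) := by
    have h := Gamma_add_nat (b+1) n (by
      intro i hi
      have : (0:ℝ) ≤ (i:ℝ) := by positivity
      intro hcon; nlinarith)
    rw [show (b+1) + ((n:ℕ):ℝ) = b+(n:ℝ)+1 by ring] at h
    rw [h]
    field_simp
  have hG21 : Real.Gamma (a+b+2*(n:ℝ)+2) = (a+b+2*(n:ℝ)+1) * Real.Gamma (a+b+2*(n:ℝ)+1) := by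
    rw [show a+b+2*(n:ℝ)+2 = (a+b+2*(n:ℝ)+1)+1 by ring, Real.Gamma_add_one hs]
  rw [hQ, hPn, hG21, knorm]
  rw [show 2*(n:ℝ)+a+b+1 = a+b+2*(n:ℝ)+1 by ring,
    show (n:ℝ)+a+1 = a+(n:ℝ)+1 by ring,
    show (n:ℝ)+b+1 = b+(n:ℝ)+1 by ring,
    show (n:ℝ)+a+b+1 = a+b+(n:ℝ)+1 by ring]
  rw [show (2:ℝ)^(a+b+2*(n:ℝ)+1) = (2:ℝ)^(n:ℕ) * ((2:ℝ)^(n:ℕ) * (2:ℝ)^(a+b+1)) by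
    rw [show a+b+2*(n:ℝ)+1 = (n:ℝ)+((n:ℝ)+(a+b+1)) by ring, Real.rpow_add (by norm_num),
      Real.rpow_add (by norm_num), Real.rpow_natCast]]
  rcases Nat.even_or_odd n with hpar | hpar
  · rw [hpar.neg_one_pow]
    field_simp
  · rw [hpar.neg_one_pow]
    field_simp

end Stmt15

open Stmt15

theorem stmt15 (α β ξ ε : ℝ) (hα : 0 < α) (hβ : 0 < β) (hξ : 1 < |ξ|)
    (hε : ε = if ξ < -1 then 1 else -1) (n : ℕ)
    (h1 : (jacobiP (α - 1) (β - 1) n).eval ξ ≠ 0)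
    (h2 : (jacobiP (α - 1) (β - 1) (n + 1)).eval ξ ≠ 0)
    (P : Polynomial ℝ)
    (hP : (Polynomial.X - Polynomial.C ξ) * P =
      jacobiP (α - 1) (β - 1) (n + 1) -
        Polynomial.C ((jacobiP (α - 1) (β - 1) (n + 1)).eval ξ /
            (jacobiP (α - 1) (β - 1) n).eval ξ) * jacobiP (α - 1) (β - 1) n) :
    P.Monic ∧ P.natDegree = n ∧
    (∀ q : Polynomial ℝ, q.degree < n →
      ∫ x in Set.Ioo (-1 : ℝ) 1,
        q.eval x * P.eval x * (ε * (x - ξ)) * (1 - x) ^ (α - 1) * (1 + x) ^ (β - 1) = 0) ∧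
    ∫ x in Set.Ioo (-1 : ℝ) 1,
        (P.eval x) ^ 2 * (ε * (x - ξ)) * (1 - x) ^ (α - 1) * (1 + x) ^ (β - 1) =
      -(ε * knorm (α - 1) (β - 1) n *
        (jacobiP (α - 1) (β - 1) (n + 1)).eval ξ / (jacobiP (α - 1) (β - 1) n).eval ξ) := by
  have ha : -1 < α - 1 := by linarith
  have hb : -1 < β - 1 := by linarith
  have hab : -2 < (α - 1) + (β - 1) := by linarith
  have hn0 : (0:ℝ) ≤ (n:ℝ) := by positivity
  have hΓ : (α - 1) + (β - 1) + 2*(n:ℝ) + 1 ≠ 0 := by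
    intro hcon
    have hn' : n = 0 := by
      by_contra hne
      have hge : (1:ℝ) ≤ (n:ℝ) := by exact_mod_cast Nat.one_le_iff_ne_zero.2 hne
      linarith
    subst hn'
    apply h1
    have hz2 : Real.Gamma ((α-1) + (β-1) + ((0:ℕ):ℝ) + ((0:ℕ):ℝ) + 1) = 0 := by
      rw [show (α-1) + (β-1) + ((0:ℕ):ℝ) + ((0:ℕ):ℝ) + 1 = 0 by push_cast at hcon ⊢; linarith]
      exact Real.Gamma_zero
    rw [jacobiP, Finset.sum_range_one, Polynomial.eval_mul, Polynomial.eval_C]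
    rw [hz2]
    simp
  obtain ⟨hm0, hd0, hnd0⟩ := jacobi_monic ha hab n hΓ
  have hΓ' : (α - 1) + (β - 1) + 2*((n+1:ℕ):ℝ) + 1 ≠ 0 := by
    push_cast
    intro hcon
    linarith
  obtain ⟨hm1, hd1, hnd1⟩ := jacobi_monic ha hab (n+1) hΓ'
  set J0 : Polynomial ℝ := jacobiP (α - 1) (β - 1) n with hJ0
  set J1 : Polynomial ℝ := jacobiP (α - 1) (β - 1) (n+1) with hJ1
  set cc : ℝ := Polynomial.eval ξ J1 / Polynomial.eval ξ J0 with hcc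
  have hdegC : (Polynomial.C cc * J0).degree < J1.degree := by
    rw [hd1]
    apply lt_of_le_of_lt (Polynomial.degree_mul_le _ _)
    calc (Polynomial.C cc).degree + J0.degree
        ≤ 0 + ((n:ℕ) : WithBot ℕ) := add_le_add Polynomial.degree_C_le (jacobi_degree_le _ _ n)
      _ = ((n:ℕ) : WithBot ℕ) := zero_add _
      _ < (((n+1:ℕ)) : WithBot ℕ) := by exact_mod_cast Nat.lt_succ_self n
  have hRmon : (J1 - Polynomial.C cc * J0).Monic := by
    rw [sub_eq_add_neg]
    exact hm1.add_of_left (by rw [Polynomial.degree_neg]; exact hdegC)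
  have hRdeg : (J1 - Polynomial.C cc * J0).degree = (((n+1:ℕ)) : WithBot ℕ) := by
    rw [Polynomial.degree_sub_eq_left_of_degree_lt hdegC, hd1]
  have hPm : P.Monic :=
    (Polynomial.monic_X_sub_C ξ).of_mul_monic_left (by rw [hP]; exact hRmon)
  have hPdeg : P.natDegree = n := by
    have hnd := congrArg Polynomial.natDegree hP
    rw [(Polynomial.monic_X_sub_C ξ).natDegree_mul hPm, Polynomial.natDegree_X_sub_C,
      Polynomial.natDegree_eq_of_degree_eq_some hRdeg] at hnd
    omega
  have hkey : ∀ x : ℝ,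
      (x - ξ) * P.eval x = Polynomial.eval x J1 - cc * Polynomial.eval x J0 := by
    intro x
    have h := congrArg (Polynomial.eval x) hP
    simpa using h
  have hint : ∀ (u v : Polynomial ℝ), IntegrableOn
      (fun x => u.eval x * Polynomial.eval x v * ((1-x)^(α-1) * (1+x)^(β-1)))
      (Set.Ioo (-1:ℝ) 1) volume := by
    intro u v
    apply (poly_weight_integrable ha hb (u * v)).congr_fun _ measurableSet_Ioo
    intro x _
    show Polynomial.eval x (u * v) * ((1-x)^(α-1) * (1+x)^(β-1)) = _
    rw [Polynomial.eval_mul]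
  refine ⟨hPm, hPdeg, ?_, ?_⟩
  · intro q hq
    have hq1 : q.degree < (((n+1:ℕ)) : WithBot ℕ) :=
      lt_trans hq (by exact_mod_cast Nat.lt_succ_self n)
    have heq : ∀ x ∈ Set.Ioo (-1:ℝ) 1,
        q.eval x * P.eval x * (ε * (x - ξ)) * (1 - x) ^ (α - 1) * (1 + x) ^ (β - 1)
        = ε * (q.eval x * Polynomial.eval x J1 * ((1-x)^(α-1) * (1+x)^(β-1)))
          - (ε * cc) * (q.eval x * Polynomial.eval x J0 * ((1-x)^(α-1) * (1+x)^(β-1))) := by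
      intro x _
      linear_combination (q.eval x * ε * (1-x)^(α-1) * (1+x)^(β-1)) * hkey x
    rw [MeasureTheory.setIntegral_congr_fun measurableSet_Ioo heq]
    rw [MeasureTheory.integral_sub ((hint q J1).const_mul ε) ((hint q J0).const_mul (ε * cc))]
    rw [MeasureTheory.integral_const_mul, MeasureTheory.integral_const_mul]
    rw [hJ1, hJ0, orth_poly ha hb q hq1, orth_poly ha hb q hq]
    ring
  · have hPd : P.degree = ((n:ℕ) : WithBot ℕ) := by
      rw [Polynomial.degree_eq_natDegree hPm.ne_zero, hPdeg]
    have hPd1 : P.degree < (((n+1:ℕ)) : WithBot ℕ) := by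
      rw [hPd]; exact_mod_cast Nat.lt_succ_self n
    set r : Polynomial ℝ := P - (Polynomial.X - Polynomial.C 1)^n with hr
    have hpowmon : ((Polynomial.X - Polynomial.C (1:ℝ))^n).Monic :=
      (Polynomial.monic_X_sub_C 1).pow n
    have hpowdeg : ((Polynomial.X - Polynomial.C (1:ℝ))^n).degree = ((n:ℕ) : WithBot ℕ) := by
      rw [Polynomial.degree_pow, Polynomial.degree_X_sub_C]
      simp
    have hrdeg : r.degree < ((n:ℕ) : WithBot ℕ) := by
      have h := Polynomial.degree_sub_lt
        (show P.degree = ((Polynomial.X - Polynomial.C (1:ℝ))^n).degree by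
          rw [hPd, hpowdeg])
        hPm.ne_zero
        (show P.leadingCoeff = ((Polynomial.X - Polynomial.C (1:ℝ))^n).leadingCoeff by
          rw [hPm.leadingCoeff, hpowmon.leadingCoeff])
      rw [hPd] at h
      exact h
    have hipow : IntegrableOn
        (fun x => (x-1)^n * Polynomial.eval x J0 * ((1-x)^(α-1) * (1+x)^(β-1)))
        (Set.Ioo (-1:ℝ) 1) volume := by
      apply (poly_weight_integrable ha hb ((Polynomial.X - Polynomial.C 1)^n * J0)).congr_fun
        _ measurableSet_Ioo
      intro x _
      show Polynomial.eval x ((Polynomial.X - Polynomial.C 1)^n * J0) *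
          ((1-x)^(α-1) * (1+x)^(β-1)) = _
      rw [Polynomial.eval_mul, Polynomial.eval_pow, Polynomial.eval_sub, Polynomial.eval_X,
        Polynomial.eval_C]
    have heq : ∀ x ∈ Set.Ioo (-1:ℝ) 1,
        (P.eval x)^2 * (ε * (x - ξ)) * (1 - x) ^ (α - 1) * (1 + x) ^ (β - 1)
        = ε * (P.eval x * Polynomial.eval x J1 * ((1-x)^(α-1) * (1+x)^(β-1)))
          - (ε * cc) * (((x-1)^n * Polynomial.eval x J0 * ((1-x)^(α-1) * (1+x)^(β-1)))
            + (r.eval x * Polynomial.eval x J0 * ((1-x)^(α-1) * (1+x)^(β-1)))) := by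
      intro x _
      have hre : r.eval x = P.eval x - (x-1)^n := by
        rw [hr]
        simp
      rw [hre]
      linear_combination (P.eval x * ε * (1-x)^(α-1) * (1+x)^(β-1)) * hkey x
    have hsum : IntegrableOn
        (fun x => (x-1)^n * Polynomial.eval x J0 * ((1-x)^(α-1) * (1+x)^(β-1))
          + r.eval x * Polynomial.eval x J0 * ((1-x)^(α-1) * (1+x)^(β-1)))
        (Set.Ioo (-1:ℝ) 1) volume := hipow.add (hint r J0)
    rw [MeasureTheory.setIntegral_congr_fun measurableSet_Ioo heq]
    rw [MeasureTheory.integral_sub ((hint P J1).const_mul ε) (hsum.const_mul (ε * cc))]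
    rw [MeasureTheory.integral_const_mul, MeasureTheory.integral_const_mul,
      MeasureTheory.integral_add hipow (hint r J0)]
    rw [hJ1, hJ0, orth_poly ha hb P hPd1, norm_basis ha hb n hΓ, orth_poly ha hb r hrdeg]
    rw [hcc, hJ1, hJ0]
    ring
end

section
/- For every real γ > 0 and all natural numbers i ≥ j, ∑_{m=0}^j (-1)^m·C(j,m)·C(i+m,i)·(γ+i+m+1)_{j-m}·(γ+j)_m = (-1)^j·C(i,j)·(γ)_j, where (a)_k = a(a+1)⋯(a+k-1) is the Pochhammer symbol and C(a,b) the binomial coefficient. -/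
open Polynomial

lemma pochL (n : ℕ) (x : ℝ) :
    (ascPochhammer ℝ (n+1)).eval x = x * (ascPochhammer ℝ n).eval (x+1) := by
  rw [ascPochhammer_succ_left]
  simp [eval_comp]

noncomputable def Gc (γ : ℝ) (i j m : ℕ) : ℝ :=
  (-1)^m * (j.choose (m-1) : ℝ) * (((i+m).choose i : ℕ) : ℝ) * m * (γ + 2*j + 1) *
    (ascPochhammer ℝ (j+1-m)).eval (γ + i + m) *
    (ascPochhammer ℝ (m-1)).eval (γ + j + 1)

lemma point (γ : ℝ) (i j m : ℕ) (hm : m ≤ j + 1) :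
    ((j:ℝ)+1) * ((-1)^m * (((j+1).choose m : ℕ) : ℝ) * (((i+m).choose i : ℕ) : ℝ) *
        (ascPochhammer ℝ (j+1-m)).eval (γ + i + m + 1) *
        (ascPochhammer ℝ m).eval (γ + j + 1))
    + ((i:ℝ) - j) * (γ + j) * ((-1)^m * ((j.choose m : ℕ) : ℝ) * (((i+m).choose i : ℕ) : ℝ) *
        (ascPochhammer ℝ (j-m)).eval (γ + i + m + 1) *
        (ascPochhammer ℝ m).eval (γ + j))
    = Gc γ i j m - Gc γ i j (m+1) := by
  rcases m with _ | m
  · -- m = 0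
    simp only [Gc, Nat.choose_zero_right, Nat.add_zero, Nat.choose_self, Nat.sub_zero,
      Nat.zero_sub, Nat.cast_zero, Nat.cast_one, pow_zero, Nat.succ_sub_one,
      ascPochhammer_zero, eval_one, Nat.choose_one_right, Nat.choose_succ_self_right]
    rw [ascPochhammer_succ_eval]
    push_cast
    ring
  · have hmj : m ≤ j := by omega
    rcases Nat.lt_or_ge m j with hlt | hge
    · -- 1 ≤ m+1 ≤ j : j = m + d + 1
      obtain ⟨d, rfl⟩ : ∃ d, j = m + d + 1 := ⟨j - m - 1, by omega⟩
      simp only [Gc,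
        show m+d+1+1-(m+1) = d+1 from by omega,
        show m+d+1-(m+1) = d from by omega,
        show m+1-1 = m from by omega,
        show m+1+1-1 = m+1 from by omega,
        show m+d+1+1-(m+1+1) = d from by omega]
      rw [show (γ + (i:ℝ) + ((m+1:ℕ):ℝ) + 1) = γ + (i:ℝ) + (m:ℝ) + 2 from by push_cast; ring,
        show (γ + ((m+d+1:ℕ):ℝ) + 1) = γ + (m:ℝ) + (d:ℝ) + 2 from by push_cast; ring,
        show (γ + ((m+d+1:ℕ):ℝ)) = γ + (m:ℝ) + (d:ℝ) + 1 from by push_cast; ring,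
        show (γ + (i:ℝ) + ((m+1:ℕ):ℝ)) = γ + (i:ℝ) + (m:ℝ) + 1 from by push_cast; ring,
        show (γ + (i:ℝ) + ((m+1+1:ℕ):ℝ)) = γ + (i:ℝ) + (m:ℝ) + 2 from by push_cast; ring]
      rw [ascPochhammer_succ_eval d (γ + (i:ℝ) + (m:ℝ) + 2),
        ascPochhammer_succ_eval m (γ + (m:ℝ) + (d:ℝ) + 2),
        show (ascPochhammer ℝ (d+1)).eval (γ + (i:ℝ) + (m:ℝ) + 1)
          = (γ + (i:ℝ) + (m:ℝ) + 1) * (ascPochhammer ℝ d).eval (γ + (i:ℝ) + (m:ℝ) + 2) from by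
            rw [pochL]; ring_nf,
        show (ascPochhammer ℝ (m+1)).eval (γ + (m:ℝ) + (d:ℝ) + 1)
          = (γ + (m:ℝ) + (d:ℝ) + 1) * (ascPochhammer ℝ m).eval (γ + (m:ℝ) + (d:ℝ) + 2) from by
            rw [pochL]; ring_nf]
      -- choose → factorials
      rw [show ((m+d+1+1).choose (m+1) : ℝ)
          = (((m:ℝ)+d+2)*(((m:ℝ)+d+1)*(Nat.factorial (m+d) : ℝ))) / ((((m:ℝ)+1)*(Nat.factorial m : ℝ)) * (((d:ℝ)+1)*(Nat.factorial d : ℝ))) from by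
            rw [Nat.cast_choose ℝ (by omega), show m+d+1+1-(m+1) = d+1 from by omega,
              Nat.factorial_succ (m+d+1), Nat.factorial_succ (m+d), Nat.factorial_succ m,
              Nat.factorial_succ d]
            push_cast; ring,
        show ((m+d+1).choose (m+1) : ℝ)
          = (((m:ℝ)+d+1)*(Nat.factorial (m+d) : ℝ)) / ((((m:ℝ)+1)*(Nat.factorial m : ℝ)) * ((Nat.factorial d : ℝ) : ℝ)) from by
            rw [Nat.cast_choose ℝ (by omega), show m+d+1-(m+1) = d from by omega,
              Nat.factorial_succ (m+d), Nat.factorial_succ m]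
            push_cast; ring,
        show ((m+d+1).choose m : ℝ)
          = (((m:ℝ)+d+1)*(Nat.factorial (m+d) : ℝ)) / (((Nat.factorial m : ℝ) : ℝ) * (((d:ℝ)+1)*(Nat.factorial d : ℝ))) from by
            rw [Nat.cast_choose ℝ (by omega), show m+d+1-m = d+1 from by omega,
              Nat.factorial_succ (m+d), Nat.factorial_succ d]
            push_cast; ring,
        show (((i+(m+1)).choose i : ℕ) : ℝ)
          = (((i:ℝ)+m+1)*(Nat.factorial (i+m) : ℝ)) / (((Nat.factorial i : ℝ) : ℝ) * (((m:ℝ)+1)*(Nat.factorial m : ℝ))) from by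
            rw [Nat.cast_choose ℝ (by omega), show i+(m+1)-i = m+1 from by omega,
              show i+(m+1) = (i+m)+1 from by omega,
              Nat.factorial_succ (i+m), Nat.factorial_succ m]
            push_cast; ring,
        show (((i+(m+1+1)).choose i : ℕ) : ℝ)
          = (((i:ℝ)+m+2)*(((i:ℝ)+m+1)*(Nat.factorial (i+m) : ℝ))) / (((Nat.factorial i : ℝ) : ℝ) * ((((m:ℝ)+2))*(((m:ℝ)+1)*(Nat.factorial m : ℝ)))) from by
            rw [Nat.cast_choose ℝ (by omega), show i+(m+1+1)-i = m+2 from by omega,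
              show i+(m+1+1) = ((i+m)+1)+1 from by omega,
              Nat.factorial_succ ((i+m)+1), Nat.factorial_succ (i+m),
              show m+2 = (m+1)+1 from by omega,
              Nat.factorial_succ (m+1), Nat.factorial_succ m]
            push_cast; ring]
      have n1 : (Nat.factorial (m+d) : ℝ) ≠ 0 := by exact_mod_cast (Nat.factorial_pos (m+d)).ne'
      have n2 : (Nat.factorial m : ℝ) ≠ 0 := by exact_mod_cast (Nat.factorial_pos m).ne'
      have n3 : (Nat.factorial d : ℝ) ≠ 0 := by exact_mod_cast (Nat.factorial_pos d).ne'
      have n4 : (Nat.factorial i : ℝ) ≠ 0 := by exact_mod_cast (Nat.factorial_pos i).ne'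
      have n5 : (Nat.factorial (i+m) : ℝ) ≠ 0 := by exact_mod_cast (Nat.factorial_pos (i+m)).ne'
      have p1 : ((m:ℝ)+1) ≠ 0 := by positivity
      have p2 : ((d:ℝ)+1) ≠ 0 := by positivity
      have p3 : ((m:ℝ)+2) ≠ 0 := by positivity
      push_cast
      field_simp
      ring
    · -- m = j : index is j+1
      obtain rfl : m = j := by omega
      simp only [Gc, Nat.choose_succ_self, Nat.choose_self, Nat.succ_sub_one, Nat.sub_self,
        show m+1-(m+1) = 0 from by omega, show m+1+1-1 = m+1 from by omega,
        show m+1-(m+1+1) = 0 from by omega, show m+1+1-(m+1) = 1 from by omega,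
        show m+1+1-(m+1+1) = 0 from by omega,
        ascPochhammer_zero, eval_one, Nat.cast_zero, Nat.cast_one]
      rw [ascPochhammer_succ_eval m (γ + (m:ℝ) + 1)]
      push_cast
      ring

theorem stmt19 (γ : ℝ) (hγ : 0 < γ) (i j : ℕ) (hij : j ≤ i) :
    ∑ m ∈ Finset.range (j + 1),
        (-1 : ℝ) ^ m * (j.choose m : ℝ) * ((i + m).choose i : ℝ) *
          (ascPochhammer ℝ (j - m)).eval (γ + (i : ℝ) + (m : ℝ) + 1) *
          (ascPochhammer ℝ m).eval (γ + (j : ℝ)) =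
      (-1 : ℝ) ^ j * (i.choose j : ℝ) * (ascPochhammer ℝ j).eval γ := by
  clear hγ
  induction j with
  | zero => simp
  | succ j ih =>
    have IH := ih (by omega)
    have key :
        ((j:ℝ)+1) * (∑ m ∈ Finset.range (j+1+1),
            (-1:ℝ)^m * (((j+1).choose m : ℕ):ℝ) * (((i+m).choose i : ℕ):ℝ) *
              (ascPochhammer ℝ (j+1-m)).eval (γ + i + m + 1) *
              (ascPochhammer ℝ m).eval (γ + j + 1))
        + ((i:ℝ) - j) * (γ + j) * (∑ m ∈ Finset.range (j+1+1),
            (-1:ℝ)^m * ((j.choose m : ℕ):ℝ) * (((i+m).choose i : ℕ):ℝ) *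
              (ascPochhammer ℝ (j-m)).eval (γ + i + m + 1) *
              (ascPochhammer ℝ m).eval (γ + j)) = 0 := by
      rw [Finset.mul_sum, Finset.mul_sum, ← Finset.sum_add_distrib]
      calc (∑ m ∈ Finset.range (j+1+1), _) 
          = ∑ m ∈ Finset.range (j+1+1), (Gc γ i j m - Gc γ i j (m+1)) :=
            Finset.sum_congr rfl (fun m hm =>
              point γ i j m (Nat.lt_succ_iff.mp (Finset.mem_range.mp hm)))
        _ = Gc γ i j 0 - Gc γ i j (j+1+1) := Finset.sum_range_sub' _ _
        _ = 0 := by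
            simp [Gc, show j+1+1-1 = j+1 from rfl, Nat.choose_succ_self]
    have h2 : (∑ m ∈ Finset.range (j+1+1),
            (-1:ℝ)^m * ((j.choose m : ℕ):ℝ) * (((i+m).choose i : ℕ):ℝ) *
              (ascPochhammer ℝ (j-m)).eval (γ + i + m + 1) *
              (ascPochhammer ℝ m).eval (γ + j))
        = ∑ m ∈ Finset.range (j+1),
            (-1:ℝ)^m * ((j.choose m : ℕ):ℝ) * (((i+m).choose i : ℕ):ℝ) *
              (ascPochhammer ℝ (j-m)).eval (γ + i + m + 1) *
              (ascPochhammer ℝ m).eval (γ + j) := by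
      rw [Finset.sum_range_succ]
      simp [Nat.choose_succ_self]
    have kA := eq_neg_of_add_eq_zero_left key
    rw [h2, IH] at kA
    have hS : (∑ m ∈ Finset.range (j + 1 + 1),
        (-1 : ℝ) ^ m * ((j+1).choose m : ℝ) * ((i + m).choose i : ℝ) *
          (ascPochhammer ℝ (j + 1 - m)).eval (γ + (i : ℝ) + (m : ℝ) + 1) *
          (ascPochhammer ℝ m).eval (γ + ((j+1 : ℕ) : ℝ)))
        = ∑ m ∈ Finset.range (j+1+1),
            (-1:ℝ)^m * (((j+1).choose m : ℕ):ℝ) * (((i+m).choose i : ℕ):ℝ) *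
              (ascPochhammer ℝ (j+1-m)).eval (γ + i + m + 1) *
              (ascPochhammer ℝ m).eval (γ + j + 1) := by
      apply Finset.sum_congr rfl
      intro m _
      rw [show (γ + ((j+1 : ℕ) : ℝ)) = γ + (j:ℝ) + 1 from by push_cast; ring]
    rw [hS]
    have hj1 : ((j:ℝ)+1) ≠ 0 := by positivity
    apply mul_left_cancel₀ hj1
    rw [kA, ascPochhammer_succ_eval j γ, pow_succ]
    have hc : ((j:ℝ)+1) * (i.choose (j+1) : ℝ) = ((i:ℝ) - (j:ℝ)) * (i.choose j : ℝ) := by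
      have h' : ((i.choose (j+1) * (j+1) : ℕ) : ℝ) = ((i.choose j * (i-j) : ℕ) : ℝ) := by
        exact_mod_cast congrArg (Nat.cast (R := ℝ)) (Nat.choose_succ_right_eq i j)
      rw [Nat.cast_mul, Nat.cast_mul, Nat.cast_sub (by omega : j ≤ i)] at h'
      push_cast at h'
      linarith
    linear_combination ((-1:ℝ)^j * (γ + (j:ℝ)) * (ascPochhammer ℝ j).eval γ) * hc
end
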